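/- arXiv:1403.1741 — 6 statements merged into one kernel-verified Lean document; each statement's English description precedes it below -/
import Mathlib

section
/- Let X be an isotropic Grassmannian of Lie type B or C, i.e. work with Schubert symbols in [1,N] where all cuts are apparent cuts. Suppose (j,c) is a lone star in D(P,T) for Schubert symbols T ≤ P. If c = t_j and t_j is an apparent cut, or if c = p_j and p_j − 1 is an apparent cut, then either N+1−c is a zero column of D(P,T), or t_j = p_j = c. -/
open scoped Classical

/-- `p : ℕ → ℕ` encodes a Schubert symbol `{p 1 < … < p m} ⊆ [1,N]`
with the conventions `p 0 = 0` and `p (m+1) = N+1`, and the isotropic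
condition that no two elements sum to `N+1`. -/
structure IsSSym (N m : ℕ) (p : ℕ → ℕ) : Prop where
  zero : p 0 = 0
  top : p (m+1) = N+1
  mono : ∀ i j, i < j → j ≤ m+1 → p i < p j
  ub : ∀ i, 1 ≤ i → i ≤ m → p i ≤ N
  iso : ∀ i j, 1 ≤ i → i ≤ m → 1 ≤ j → j ≤ m → p i + p j ≠ N+1

/-- The underlying set `{p 1, …, p m}` of a Schubert symbol. -/
def symSet (m : ℕ) (p : ℕ → ℕ) : Finset ℕ := (Finset.Icc 1 m).image p

/-- Componentwise order `t_i ≤ p_i` on Schubert symbols. -/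
def leS (m : ℕ) (t p : ℕ → ℕ) : Prop := ∀ i, 1 ≤ i → i ≤ m → t i ≤ p i

/-- `c` is a visible cut of the Richardson diagram `D(P,T)`:
`p_i ≤ c < t_{i+1}` for some `0 ≤ i ≤ m`. -/
def visCut (m : ℕ) (p t : ℕ → ℕ) (c : ℕ) : Prop :=
  ∃ i, i ≤ m ∧ p i ≤ c ∧ c < t (i+1)

/-- `c` is an apparent cut of `D(P,T)`: `c` or `N−c` is a visible cut. -/
def appCut (N m : ℕ) (p t : ℕ → ℕ) (c : ℕ) : Prop :=
  visCut m p t c ∨ visCut m p t (N - c)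

/-- `c` is a zero column of `D(P,T)`: `p_j < c < t_{j+1}` for some `j`. -/
def zeroCol (m : ℕ) (p t : ℕ → ℕ) (c : ℕ) : Prop :=
  ∃ j, j ≤ m ∧ p j < c ∧ c < t (j+1)

/-- `(j,c)` is a lone star of `D(P,T)` with respect to the cut predicate `cut`. -/
def loneStar (m : ℕ) (p t : ℕ → ℕ) (cut : ℕ → Prop) (j c : ℕ) : Prop :=
  1 ≤ j ∧ j ≤ m ∧ t j ≤ c ∧ c ≤ p j ∧
    ((c = t j ∧ cut c) ∨ (c = p j ∧ cut (c-1)))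

/-- `c ∈ 𝓛_{P,T}` : `c` is a zero column, or column `N+1−c` contains a lone star. -/
def LSet (N m : ℕ) (p t : ℕ → ℕ) (cut : ℕ → Prop) (c : ℕ) : Prop :=
  1 ≤ c ∧ c ≤ N ∧
    (zeroCol m p t c ∨ ∃ j, loneStar m p t cut j (N+1-c))

/-- `[P] = P ∪ {N+1−p : p ∈ P}`. -/
def brP (N : ℕ) (P : Finset ℕ) : Finset ℕ := P ∪ P.image (fun p => N+1-p)

/-- The type-`D` type function `t(P) ∈ {0,1,2}`: if `n+1 ∈ [P]` it is the parity of
`#([1,n+1] \ P)`; otherwise it is `2`. -/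
def tD (n : ℕ) (P : Finset ℕ) : ℕ :=
  if (n+1) ∈ P ∨ (n+2) ∈ P then (Finset.Icc 1 (n+1) \ P).card % 2 else 2

/-- The type-`D` Bruhat order `T ⪯ P` on Schubert symbols for `OG(m, 2n+2)`. -/
def bruhatD (n m : ℕ) (t p : ℕ → ℕ) : Prop :=
  leS m t p ∧ ∀ c, 1 ≤ c → c ≤ n →
    Finset.Icc (c+1) (n+1) ⊆ brP (2*n+2) (symSet m p) →
    Finset.Icc (c+1) (n+1) ⊆ brP (2*n+2) (symSet m t) →
    ((symSet m p) ∩ Finset.Icc 1 c).card = ((symSet m t) ∩ Finset.Icc 1 c).card →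
    tD n (symSet m p) = tD n (symSet m t)

/-- The exceptional center cut `n+1` exists in `D(P,T)`:
`p_i = n+2 ≤ t_{i+1}` or `t_i = n+1 ≥ p_{i−1}` for some `i`. -/
def centerCut (n m : ℕ) (p t : ℕ → ℕ) : Prop :=
  ∃ i, 1 ≤ i ∧ i ≤ m ∧
    ((p i = n+2 ∧ n+2 ≤ t (i+1)) ∨ (t i = n+1 ∧ p (i-1) ≤ n+1))

/-- `c ∈ [1,n]` is a cut candidate of `D(P,T)`:
`[c+1,n+1] ⊆ [P] ∩ [T]` and `#(T ∩ [1,c]) = #(P ∩ [1,c]) + 1`. -/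
def cutCandidate (n m : ℕ) (p t : ℕ → ℕ) (c : ℕ) : Prop :=
  1 ≤ c ∧ c ≤ n ∧
  Finset.Icc (c+1) (n+1) ⊆ brP (2*n+2) (symSet m p) ∧
  Finset.Icc (c+1) (n+1) ⊆ brP (2*n+2) (symSet m t) ∧
  ((symSet m t) ∩ Finset.Icc 1 c).card = ((symSet m p) ∩ Finset.Icc 1 c).card + 1

/-- Exceptional cuts of `D(P,T)` in type `D`. -/
def excCut (n m : ℕ) (p t : ℕ → ℕ) (c : ℕ) : Prop :=
  (centerCut n m p t ∧ c = n+1) ∨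
  (tD n (symSet m t) ≠ tD n (symSet m p) ∧
    ∃ d, cutCandidate n m p t d ∧ (c = d ∨ c = 2*n+2 - d))

/-- The type-`D` cut set: apparent cuts together with exceptional cuts. -/
def cutD (n m : ℕ) (p t : ℕ → ℕ) (c : ℕ) : Prop :=
  appCut (2*n+2) m p t c ∨ excCut n m p t c

/-- The construction of the Schubert symbol `P'` from `T ⪯ P` in types `B` and `C`. -/
noncomputable def Pp (N m : ℕ) (p t : ℕ → ℕ) (i : ℕ) : ℕ :=
  if p i < t (i+1) then p i
  else if ¬ appCut N m p t (t (i+1) - 1) then t (i+1)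
  else ((Finset.Icc (t i) (t (i+1) - 1)).filter
        (fun c => ¬ LSet N m p t (appCut N m p t) c)).sup id

/-- The modified construction of the Schubert symbol `P̃` from `T ⪯ P` in type `D`. -/
noncomputable def Ptil (n m : ℕ) (p t : ℕ → ℕ) (i : ℕ) : ℕ :=
  if p i < t (i+1) then p i
  else if ¬ cutD n m p t (t (i+1) - 1) then
    (if t (i+1) = n+1 ∨ t (i+1) = n+2 then 2*n+3 - t (i+1) else t (i+1))
  else ((Finset.Icc (t i) (t (i+1) - 1)).filter
        (fun c => ¬ LSet (2*n+2) m p t (cutD n m p t) c)).sup id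

/-- A critical window `[c+1, N−c]` in `D(P,T)` (type `D`, defined when `t(T) ≠ t(P)`):
`c` and `N−c` are visible cuts and `[c+1,n+1] ⊆ [T] ∩ [P]`. -/
def critWindow (n m : ℕ) (p t : ℕ → ℕ) (c : ℕ) : Prop :=
  c ≤ n ∧ tD n (symSet m t) ≠ tD n (symSet m p) ∧
  visCut m p t c ∧ visCut m p t (2*n+2 - c) ∧
  Finset.Icc (c+1) (n+1) ⊆ brP (2*n+2) (symSet m t) ∧
  Finset.Icc (c+1) (n+1) ⊆ brP (2*n+2) (symSet m p)

/-- The quadratic form `f_c = x_1 x_N + … + x_c x_{N+1−c}`. -/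
noncomputable def fquad (N : ℕ) (c : ℕ) (x : ℕ → ℂ) : ℂ := ∑ i ∈ Finset.Icc 1 c, x i * x (N+1-i)

/-- The variety `Z_{P,T}` (affine cone) cut out by quadratic equations `f_c = 0`
for `c` in a prescribed set `Q` and linear equations `x_c = 0` for `c ∈ 𝓛_{P,T}`. -/
def Zvar (N m : ℕ) (p t : ℕ → ℕ) (Q : ℕ → Prop) (cut : ℕ → Prop) : Set (ℕ → ℂ) :=
  {x | (∀ c, Q c → fquad N c x = 0) ∧ ∀ c, LSet N m p t cut c → x c = 0}

/-- (types B/C, where cuts are apparent cuts) If `(j,c)` is a lone star of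
`D(P,T)` then either `N+1−c` is a zero column or `t_j = p_j = c`. -/
theorem stmt_3 (N m : ℕ) (p t : ℕ → ℕ)
    (hp : IsSSym N m p) (ht : IsSSym N m t) (hle : leS m t p)
    (j c : ℕ) (hls : loneStar m p t (appCut N m p t) j c) :
    zeroCol m p t (N+1-c) ∨ (t j = c ∧ p j = c) := by
  obtain ⟨hj1, hjm, htc, hcp, hcase⟩ := hls
  have htj1 : 1 ≤ t j := by
    have := ht.mono 0 j hj1 (by omega)
    rw [ht.zero] at this; omega
  have htjN : t j ≤ N := ht.ub j hj1 hjm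
  have hpjN : p j ≤ N := hp.ub j hj1 hjm
  -- helper: p i ≤ x < p j (with i ≤ m) forces i < j
  have plt : ∀ i, i ≤ m → p i < p j → i < j := by
    intro i him hlt
    by_contra h
    push_neg at h
    rcases eq_or_lt_of_le h with h' | h'
    · subst h'; omega
    · have := hp.mono j i h' (by omega); omega
  have tlt : ∀ i, i ≤ m → t j < t (i+1) → j ≤ i := by
    intro i him hlt
    by_contra h
    push_neg at h
    rcases eq_or_lt_of_le (Nat.succ_le_of_lt h) with h' | h'
    · exact absurd hlt (by rw [show i+1 = j from h']; exact lt_irrefl _)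
    · have := ht.mono (i+1) j h' (by omega); omega
  rcases hcase with ⟨hc, hcut⟩ | ⟨hc, hcut⟩
  · -- c = t j, c is an apparent cut
    by_cases heq : t j = p j
    · right; omega
    · left
      have hclt : c < p j := by omega
      rcases hcut with ⟨i, him, hpi, hti⟩ | ⟨i, him, hpi, hti⟩
      · -- visible cut at c: contradiction
        exfalso
        have h1 : i < j := plt i him (by omega)
        have h2 : j ≤ i := tlt i him (by omega)
        omega
      · -- visible cut at N - c
        have hne : N + 1 - c ≠ t (i+1) := by
          intro hEq
          rcases eq_or_lt_of_le him with h' | h'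
          · rw [h'] at hEq; have := ht.top; omega
          · have := ht.iso j (i+1) hj1 hjm (by omega) (by omega)
            omega
        exact ⟨i, him, by omega, by omega⟩
  · -- c = p j, c - 1 is an apparent cut
    by_cases heq : t j = p j
    · right; omega
    · left
      have hclt : t j < c := by omega
      rcases hcut with ⟨i, him, hpi, hti⟩ | ⟨i, him, hpi, hti⟩
      · -- visible cut at c - 1: contradiction
        exfalso
        have h1 : i < j := plt i him (by omega)
        have h2 : j ≤ i := tlt i him (by omega)
        omega
      · -- visible cut at N - (c - 1) = N + 1 - c
        have hne : p i ≠ N + 1 - c := by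
          intro hEq
          rcases Nat.eq_zero_or_pos i with h' | h'
          · rw [h', hp.zero] at hEq; omega
          · have := hp.iso i j h' him hj1 hjm; omega
        exact ⟨i, him, by omega, by omega⟩
end

section
/- Let T ≤ P be Schubert symbols in [1,N] where cuts mean apparent cuts (types B and C). If c ∈ L_{P,T}, then both c and c−1 are cuts of D(P,T). -/
open scoped Classical

lemma sym_mono_le {N m : ℕ} {t : ℕ → ℕ} (ht : IsSSym N m t) {a b : ℕ}
    (hab : a ≤ b) (hb : b ≤ m+1) : t a ≤ t b := by
  rcases eq_or_lt_of_le hab with h | h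
  · exact h ▸ le_rfl
  · exact le_of_lt (ht.mono a b h hb)

lemma appCut_symm {N m : ℕ} {p t : ℕ → ℕ} {c : ℕ} (hc : c ≤ N)
    (h : appCut N m p t c) : appCut N m p t (N - c) := by
  rcases h with h | h
  · right; rwa [Nat.sub_sub_self hc]
  · left; exact h

/-- If `t j` is a cut then so is `t j - 1`. -/
lemma cut_tj {N m : ℕ} {p t : ℕ → ℕ}
    (hp : IsSSym N m p) (ht : IsSSym N m t) (hle : leS m t p)
    {j : ℕ} (hj1 : 1 ≤ j) (hjm : j ≤ m)
    (h : appCut N m p t (t j)) : appCut N m p t (t j - 1) := by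
  have h0 : t 0 < t j := ht.mono 0 j hj1 (by omega)
  have htj1 : 1 ≤ t j := by rw [ht.zero] at h0; omega
  have htjN : t j ≤ N := ht.ub j hj1 hjm
  rcases h with ⟨i, him, hpi, hlt⟩ | ⟨i, him, hpi, hlt⟩
  · -- visible cut at t j forces p j = t j, single box row
    have hji : j ≤ i := by
      by_contra h'
      push_neg at h'
      have := sym_mono_le ht (show i+1 ≤ j by omega) (by omega)
      omega
    have h2 : p j ≤ p i := sym_mono_le hp hji (by omega)
    have h3 : t j ≤ p j := hle j hj1 hjm
    have hpjtj : p j = t j := by omega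
    have hpj1 : p (j-1) < p j := hp.mono (j-1) j (by omega) (by omega)
    refine Or.inl ⟨j-1, by omega, by omega, ?_⟩
    have hj' : j - 1 + 1 = j := by omega
    rw [hj']
    omega
  · -- visible cut at N - t j
    refine Or.inr ?_
    have harith : N - (t j - 1) = N - t j + 1 := by omega
    rw [harith]
    by_cases h' : N - t j + 1 < t (i+1)
    · exact ⟨i, him, by omega, h'⟩
    · have heq : t (i+1) = N - t j + 1 := by omega
      rcases eq_or_lt_of_le him with rfl | hlt2
      · have := ht.top
        omega
      · have := ht.iso (i+1) j (by omega) (by omega) hj1 hjm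
        omega

/-- If `p j - 1` is a cut then so is `p j`. -/
lemma cut_pj {N m : ℕ} {p t : ℕ → ℕ}
    (hp : IsSSym N m p) (ht : IsSSym N m t) (hle : leS m t p)
    {j : ℕ} (hj1 : 1 ≤ j) (hjm : j ≤ m)
    (h : appCut N m p t (p j - 1)) : appCut N m p t (p j) := by
  have h0 : p 0 < p j := hp.mono 0 j hj1 (by omega)
  have hpj1 : 1 ≤ p j := by rw [hp.zero] at h0; omega
  have hpjN : p j ≤ N := hp.ub j hj1 hjm
  have htp : t j ≤ p j := hle j hj1 hjm
  rcases h with ⟨i, him, hpi, hlt⟩ | ⟨i, him, hpi, hlt⟩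
  · -- visible cut at p j - 1 forces t j = p j
    have hij : i < j := by
      by_contra h'
      push_neg at h'
      have := sym_mono_le hp h' (by omega)
      omega
    have h4 : t (i+1) ≤ t j := sym_mono_le ht (by omega) (by omega)
    have htjpj : t j = p j := by omega
    have h5 : t j < t (j+1) := ht.mono j (j+1) (by omega) (by omega)
    exact Or.inl ⟨j, hjm, le_rfl, by omega⟩
  · -- visible cut at N - (p j - 1)
    by_cases h' : p i ≤ N - p j
    · exact Or.inr ⟨i, him, h', by omega⟩
    · exfalso
      have hpieq : p i = N - p j + 1 := by omega
      have hi1 : 1 ≤ i := by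
        by_contra h''
        have : i = 0 := by omega
        rw [this, hp.zero] at hpieq
        omega
      have := hp.iso i j hi1 him hj1 hjm
      omega

/-- (types B/C) If `c ∈ 𝓛_{P,T}` then both `c` and `c−1`
are (apparent) cuts of `D(P,T)`. -/
theorem stmt_4 (N m : ℕ) (p t : ℕ → ℕ)
    (hp : IsSSym N m p) (ht : IsSSym N m t) (hle : leS m t p)
    (c : ℕ) (hc : LSet N m p t (appCut N m p t) c) :
    appCut N m p t c ∧ appCut N m p t (c-1) := by
  obtain ⟨hc1, hcN, hmain⟩ := hc
  rcases hmain with ⟨j, hjm, hz1, hz2⟩ | ⟨j, hj1, hjm, hts, hsp, hcase⟩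
  · -- zero column: flanked by visible cuts
    exact ⟨Or.inl ⟨j, hjm, by omega, hz2⟩, Or.inl ⟨j, hjm, by omega, by omega⟩⟩
  · -- lone star in column c' = N+1-c
    have htjN : t j ≤ N := ht.ub j hj1 hjm
    have hpjN : p j ≤ N := hp.ub j hj1 hjm
    rcases hcase with ⟨hE, hcut⟩ | ⟨hE, hcut⟩
    · -- N+1-c = t j, cut at t j
      rw [hE] at hcut
      constructor
      · have hA := cut_tj hp ht hle hj1 hjm hcut
        have hB := appCut_symm (show t j - 1 ≤ N by omega) hA
        have : N - (t j - 1) = c := by omega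
        rwa [this] at hB
      · have hB := appCut_symm (show t j ≤ N by omega) hcut
        have : N - t j = c - 1 := by omega
        rwa [this] at hB
    · -- N+1-c = p j, cut at p j - 1
      rw [show N+1-c-1 = p j - 1 by omega] at hcut
      constructor
      · have hB := appCut_symm (show p j - 1 ≤ N by omega) hcut
        have : N - (p j - 1) = c := by omega
        rwa [this] at hB
      · have hA := cut_pj hp ht hle hj1 hjm hcut
        have hB := appCut_symm (show p j ≤ N by omega) hA
        have : N - p j = c - 1 := by omega
        rwa [this] at hB
end

section
/- Let T ≤ P be type D Schubert symbols in [1,N], N = 2n+2, with T ⪯ P in the type D Bruhat order. If c ∈ L_{P,T}, then both c and c−1 belong to the cut set C_{P,T} (which includes exceptional cuts). -/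
open scoped Classical

section Helpers

variable {N m : ℕ} {s : ℕ → ℕ}

lemma ssym_pos (hs : IsSSym N m s) {i : ℕ} (h1 : 1 ≤ i) (h2 : i ≤ m+1) : 1 ≤ s i := by
  have h := hs.mono 0 i h1 h2
  have h0 := hs.zero
  omega

lemma ssym_mono_le (hs : IsSSym N m s) {i j : ℕ} (hij : i ≤ j) (hj : j ≤ m+1) : s i ≤ s j := by
  rcases Nat.eq_or_lt_of_le hij with rfl | h
  · exact le_refl _
  · exact (hs.mono i j h hj).le

lemma ssym_ge (hs : IsSSym N m s) {i : ℕ} (h : i ≤ m+1) : i ≤ s i := by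
  induction i with
  | zero => exact Nat.zero_le _
  | succ k ih =>
    have hk : k ≤ m+1 := by omega
    have h1 := hs.mono k (k+1) (by omega) h
    have h2 := ih hk
    omega

lemma ssym_mem (x : ℕ) : x ∈ symSet m s ↔ ∃ i, 1 ≤ i ∧ i ≤ m ∧ s i = x := by
  constructor
  · intro h
    rw [symSet, Finset.mem_image] at h
    obtain ⟨i, hi, rfl⟩ := h
    rw [Finset.mem_Icc] at hi
    exact ⟨i, hi.1, hi.2, rfl⟩
  · rintro ⟨i, h1, h2, rfl⟩
    rw [symSet, Finset.mem_image]
    exact ⟨i, Finset.mem_Icc.mpr ⟨h1, h2⟩, rfl⟩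

lemma cnt_eq (hs : IsSSym N m s) {k c : ℕ} (hk : k ≤ m) (h1 : s k ≤ c) (h2 : c < s (k+1)) :
    (symSet m s ∩ Finset.Icc 1 c).card = k := by
  have hset : symSet m s ∩ Finset.Icc 1 c = (Finset.Icc 1 k).image s := by
    ext x
    rw [Finset.mem_inter, ssym_mem, Finset.mem_image, Finset.mem_Icc]
    constructor
    · rintro ⟨⟨i, hi1, him, rfl⟩, _, hxc⟩
      refine ⟨i, Finset.mem_Icc.mpr ⟨hi1, ?_⟩, rfl⟩
      by_contra hik
      have := ssym_mono_le hs (show k+1 ≤ i by omega) (by omega)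
      omega
    · rintro ⟨i, hi, rfl⟩
      rw [Finset.mem_Icc] at hi
      have h3 : s i ≤ s k := ssym_mono_le hs hi.2 (by omega)
      have h4 : 1 ≤ s i := ssym_pos hs hi.1 (by omega)
      exact ⟨⟨i, hi.1, by omega, rfl⟩, by omega, by omega⟩
  have hinj : Set.InjOn s (Finset.Icc 1 k) := by
    intro x hx y hy hxy
    simp only [Finset.coe_Icc, Set.mem_Icc] at hx hy
    rcases lt_trichotomy x y with h | h | h
    · have := hs.mono x y h (by omega); omega
    · exact h
    · have := hs.mono y x h (by omega); omega
  rw [hset, Finset.card_image_of_injOn hinj, Nat.card_Icc]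
  omega

lemma exists_level (hs : IsSSym N m s) {c : ℕ} (hc : c ≤ N) :
    ∃ k, k ≤ m ∧ s k ≤ c ∧ c < s (k+1) ∧ (symSet m s ∩ Finset.Icc 1 c).card = k := by
  classical
  set k := Nat.findGreatest (fun i => s i ≤ c) m with hkdef
  have hk : k ≤ m := Nat.findGreatest_le m
  have h1 : s k ≤ c :=
    Nat.findGreatest_spec (P := fun i => s i ≤ c) (Nat.zero_le m) (by show s 0 ≤ c; rw [hs.zero]; omega)
  have h2 : c < s (k+1) := by
    rcases Nat.eq_or_lt_of_le hk with heq | hlt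
    · rw [heq, hs.top]; omega
    · by_contra hle
      have h3 := Nat.findGreatest_is_greatest (P := fun i => s i ≤ c) (n := m) (k := k+1)
        (by omega) (by omega)
      exact h3 (le_of_not_gt hle)
  exact ⟨k, hk, h1, h2, cnt_eq hs hk h1 h2⟩

lemma mem_brP (hs : IsSSym N m s) {x : ℕ} :
    x ∈ brP N (symSet m s) ↔ ∃ i, 1 ≤ i ∧ i ≤ m ∧ (s i = x ∨ s i + x = N+1) := by
  rw [brP, Finset.mem_union, Finset.mem_image]
  constructor
  · rintro (h | ⟨y, hy, rfl⟩)
    · obtain ⟨i, h1, h2, rfl⟩ := (ssym_mem _).mp h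
      exact ⟨i, h1, h2, Or.inl rfl⟩
    · obtain ⟨i, h1, h2, rfl⟩ := (ssym_mem _).mp hy
      have hub := hs.ub i h1 h2
      have hpos := ssym_pos hs h1 (by omega)
      exact ⟨i, h1, h2, Or.inr (by omega)⟩
  · rintro ⟨i, h1, h2, h3 | h3⟩
    · exact Or.inl ((ssym_mem _).mpr ⟨i, h1, h2, h3⟩)
    · right
      refine ⟨s i, (ssym_mem _).mpr ⟨i, h1, h2, rfl⟩, by omega⟩

lemma tD_eq {n : ℕ} (S : Finset ℕ) (h : (n+1) ∈ S ∨ (n+2) ∈ S) :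
    tD n S = (n+1 - (S ∩ Finset.Icc 1 (n+1)).card) % 2 := by
  rw [tD, if_pos h]
  have h2 := Finset.card_sdiff_add_card_inter (Finset.Icc 1 (n+1)) S
  rw [Nat.card_Icc, Finset.inter_comm] at h2
  omega

lemma cnt_split (S : Finset ℕ) {c d : ℕ} (h1 : 1 ≤ c) (h2 : c ≤ d) :
    (S ∩ Finset.Icc 1 d).card
      = (S ∩ Finset.Icc 1 c).card + (S ∩ Finset.Icc (c+1) d).card := by
  have hu : Finset.Icc 1 d = Finset.Icc 1 c ∪ Finset.Icc (c+1) d := by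
    ext x
    simp only [Finset.mem_Icc, Finset.mem_union]
    omega
  rw [hu, Finset.inter_union_distrib_left]
  apply Finset.card_union_of_disjoint
  rw [Finset.disjoint_left]
  intro x hx hx2
  rw [Finset.mem_inter, Finset.mem_Icc] at hx hx2
  omega

lemma iso_upper {n m : ℕ} {s : ℕ → ℕ} (hs : IsSSym (2*n+2) m s) {e : ℕ} (he : e ≤ n) :
    (symSet m s ∩ Finset.Icc (e+1) (2*n+2-e)).card ≤ n+1-e := by
  have hcard : (symSet m s ∩ Finset.Icc (e+1) (2*n+2-e)).card ≤ (Finset.Icc (e+1) (n+1)).card := by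
    apply Finset.card_le_card_of_injOn (fun v => min v (2*n+3-v))
    · intro v hv
      rw [Finset.mem_coe, Finset.mem_inter, Finset.mem_Icc] at hv
      simp only [Finset.mem_coe, Finset.mem_Icc]
      omega
    · intro x hx y hy hxy
      simp only [Finset.coe_inter, Set.mem_inter_iff, Finset.mem_coe, Finset.mem_Icc] at hx hy
      obtain ⟨hxS, hx1, hx2⟩ := hx
      obtain ⟨hyS, hy1, hy2⟩ := hy
      obtain ⟨i, hi1, hi2, hix⟩ := (ssym_mem _).mp hxS
      obtain ⟨k, hk1, hk2, hky⟩ := (ssym_mem _).mp hyS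
      have hiso := hs.iso i k hi1 hi2 hk1 hk2
      simp only at hxy
      omega
  rw [Nat.card_Icc] at hcard
  omega

lemma brP_lower {n m : ℕ} {s : ℕ → ℕ} (hs : IsSSym (2*n+2) m s) {e : ℕ} (he : e ≤ n)
    (hsub : Finset.Icc (e+1) (n+1) ⊆ brP (2*n+2) (symSet m s)) :
    n+1-e ≤ (symSet m s ∩ Finset.Icc (e+1) (2*n+2-e)).card := by
  classical
  have hcard : (Finset.Icc (e+1) (n+1)).card
      ≤ (symSet m s ∩ Finset.Icc (e+1) (2*n+2-e)).card := by
    apply Finset.card_le_card_of_injOn (fun v => if v ∈ symSet m s then v else 2*n+3-v)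
    · intro v hv
      simp only [Finset.mem_coe] at hv ⊢
      rw [Finset.mem_Icc] at hv
      have hvb := hsub (Finset.mem_Icc.mpr hv)
      rw [mem_brP hs] at hvb
      obtain ⟨i, hi1, hi2, hcase⟩ := hvb
      by_cases hvS : v ∈ symSet m s
      · rw [if_pos hvS, Finset.mem_inter, Finset.mem_Icc]
        exact ⟨hvS, hv.1, by omega⟩
      · rw [if_neg hvS, Finset.mem_inter, Finset.mem_Icc]
        rcases hcase with h | h
        · exact absurd ((ssym_mem _).mpr ⟨i, hi1, hi2, h⟩) hvS
        · have hsi : s i = 2*n+3-v := by omega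
          exact ⟨(ssym_mem _).mpr ⟨i, hi1, hi2, hsi⟩, by omega, by omega⟩
    · intro x hx y hy hxy
      simp only [Finset.coe_Icc, Set.mem_Icc] at hx hy
      simp only at hxy
      by_cases h1 : x ∈ symSet m s
      · by_cases h2 : y ∈ symSet m s
        · rwa [if_pos h1, if_pos h2] at hxy
        · rw [if_pos h1, if_neg h2] at hxy; omega
      · by_cases h2 : y ∈ symSet m s
        · rw [if_neg h1, if_pos h2] at hxy; omega
        · rw [if_neg h1, if_neg h2] at hxy; omega
  rw [Nat.card_Icc] at hcard
  omega

end Helpers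
section Main

variable {n m : ℕ} {p t : ℕ → ℕ}

lemma visCut_zero (hp : IsSSym (2*n+2) m p) (ht : IsSSym (2*n+2) m t) :
    visCut m p t 0 := by
  have h1 : 1 ≤ t 1 := ssym_pos ht (le_refl 1) (by omega)
  exact ⟨0, Nat.zero_le m, le_of_eq hp.zero, h1⟩

lemma cutD_symm {c : ℕ} (hc : c ≤ 2*n+2) (h : cutD n m p t c) :
    cutD n m p t (2*n+2-c) := by
  rcases h with (h | h) | (⟨hcen, hceq⟩ | ⟨hmis, d, hcand, hd⟩)
  · apply Or.inl; right
    have he : 2*n+2 - (2*n+2-c) = c := by omega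
    rw [he]; exact h
  · exact Or.inl (Or.inl h)
  · exact Or.inr (Or.inl ⟨hcen, by omega⟩)
  · apply Or.inr; right
    refine ⟨hmis, d, hcand, ?_⟩
    have hd1 : 1 ≤ d := hcand.1
    have hd2 : d ≤ n := hcand.2.1
    omega

/-- shared configuration: `t i₀ = n+1` and `p (i₀-1) = n+1` forces a type mismatch
and the cut candidate `n`. -/
lemma lemK (hp : IsSSym (2*n+2) m p) (ht : IsSSym (2*n+2) m t)
    {i₀ : ℕ} (h1 : 1 ≤ i₀) (h2 : i₀ ≤ m) (ht0 : t i₀ = n+1) (hp0 : p (i₀-1) = n+1) :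
    tD n (symSet m t) ≠ tD n (symSet m p) ∧ cutCandidate n m p t n := by
  have hz := hp.zero
  have hi2 : 2 ≤ i₀ := by
    by_contra h'
    have hio : i₀ - 1 = 0 := by omega
    rw [hio, hz] at hp0
    omega
  have htlt : t (i₀-1) < t i₀ := ht.mono (i₀-1) i₀ (by omega) (by omega)
  have htpos : 1 ≤ t (i₀-1) := ssym_pos ht (by omega) (by omega)
  have hn1 : 1 ≤ n := by omega
  have hplt : p (i₀-2) < p (i₀-1) := hp.mono (i₀-2) (i₀-1) (by omega) (by omega)
  have e1 : i₀ - 1 + 1 = i₀ := by omega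
  have e2 : i₀ - 2 + 1 = i₀ - 1 := by omega
  have hplt2 : p (i₀-1) < p i₀ := hp.mono (i₀-1) i₀ (by omega) (by omega)
  have htlt2 : t i₀ < t (i₀+1) := ht.mono i₀ (i₀+1) (by omega) (by omega)
  have c1 : (symSet m t ∩ Finset.Icc 1 n).card = i₀ - 1 :=
    cnt_eq ht (by omega) (by omega) (by rw [e1, ht0]; omega)
  have c2 : (symSet m p ∩ Finset.Icc 1 n).card = i₀ - 2 :=
    cnt_eq hp (by omega) (by omega) (by rw [e2, hp0]; omega)
  have c3 : (symSet m t ∩ Finset.Icc 1 (n+1)).card = i₀ :=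
    cnt_eq ht h2 (le_of_eq ht0) (by omega)
  have c4 : (symSet m p ∩ Finset.Icc 1 (n+1)).card = i₀ - 1 :=
    cnt_eq hp (by omega) (by rw [hp0]) (by rw [e1]; omega)
  have m1 : (n+1) ∈ symSet m t := (ssym_mem _).mpr ⟨i₀, h1, h2, ht0⟩
  have m2 : (n+1) ∈ symSet m p := (ssym_mem _).mpr ⟨i₀-1, by omega, by omega, hp0⟩
  have hi_le : i₀ ≤ n+1 := by
    have := ssym_ge ht (show i₀ ≤ m+1 by omega)
    omega
  constructor
  · rw [tD_eq _ (Or.inl m1), tD_eq _ (Or.inl m2), c3, c4]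
    omega
  · refine ⟨hn1, le_refl n, ?_, ?_, ?_⟩
    · intro x hx
      rw [Finset.mem_Icc] at hx
      have hxe : x = n+1 := by omega
      subst hxe
      exact (mem_brP hp).mpr ⟨i₀-1, by omega, by omega, Or.inl hp0⟩
    · intro x hx
      rw [Finset.mem_Icc] at hx
      have hxe : x = n+1 := by omega
      subst hxe
      exact (mem_brP ht).mpr ⟨i₀, h1, h2, Or.inl ht0⟩
    · rw [c1, c2]; omega

end Main
section Main2

variable {n m : ℕ} {p t : ℕ → ℕ}

lemma cut_pred (hp : IsSSym (2*n+2) m p) (ht : IsSSym (2*n+2) m t)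
    (hb : bruhatD n m t p) {j : ℕ} (hj1 : 1 ≤ j) (hj2 : j ≤ m)
    (h : cutD n m p t (t j)) : cutD n m p t (t j - 1) := by
  have htj1 : 1 ≤ t j := ssym_pos ht hj1 (by omega)
  have htjN : t j ≤ 2*n+2 := ht.ub j hj1 hj2
  have hle := hb.1
  rcases h with (⟨i, him, hpi, hti⟩ | ⟨i, him, hpi, hti⟩) |
    (⟨⟨i₀, h01, h02, hcc⟩, hceq⟩ | ⟨hmis, e, hcand, hde⟩)
  · -- visible cut at t j
    have hji : j ≤ i := by
      by_contra h'
      have := ssym_mono_le ht (show i+1 ≤ j by omega) (by omega)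
      omega
    have hpj : p j ≤ p i := ssym_mono_le hp hji (by omega)
    have htp : t j ≤ p j := hle j hj1 hj2
    have hmo : p (j-1) < p j := hp.mono (j-1) j (by omega) (by omega)
    have e1 : j - 1 + 1 = j := by omega
    left; left
    exact ⟨j-1, by omega, by omega, by rw [e1]; omega⟩
  · -- visible cut at 2n+2 - t j
    have key : t (i+1) ≠ 2*n+3 - t j := by
      intro heq
      rcases Nat.lt_or_ge (i+1) (m+1) with h' | h'
      · exact ht.iso (i+1) j (by omega) (by omega) hj1 hj2 (by omega)
      · have hee : i + 1 = m+1 := by omega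
        rw [hee, ht.top] at heq
        omega
    left; right
    exact ⟨i, him, by omega, by omega⟩
  · -- exceptional center cut, t j = n+1
    rcases hcc with ⟨hpi0, hti0⟩ | ⟨hti0, hpi0⟩
    · -- p i₀ = n+2 and n+2 ≤ t (i₀+1)
      have key : n+2 < t (i₀+1) := by
        have h' : t (i₀+1) ≠ n+2 := by
          intro heq
          rcases Nat.lt_or_ge (i₀+1) (m+1) with h'' | h''
          · exact ht.iso (i₀+1) j (by omega) (by omega) hj1 hj2 (by omega)
          · have hee : i₀ + 1 = m+1 := by omega
            rw [hee, ht.top] at heq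
            omega
        omega
      left; right
      have e1 : 2*n+2 - (t j - 1) = n+2 := by omega
      rw [e1]
      exact ⟨i₀, by omega, by omega, key⟩
    · -- t i₀ = n+1, p (i₀-1) ≤ n+1
      rcases Nat.lt_or_ge (p (i₀-1)) (n+1) with hlt | hge
      · left; left
        have e1 : t j - 1 = n := by omega
        have e2 : i₀ - 1 + 1 = i₀ := by omega
        rw [e1]
        exact ⟨i₀-1, by omega, by omega, by rw [e2, hti0]; omega⟩
      · have hpe : p (i₀-1) = n+1 := by omega
        obtain ⟨hmis', hcand'⟩ := lemK hp ht h01 h02 hti0 hpe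
        right; right
        exact ⟨hmis', n, hcand', Or.inl (by omega)⟩
  · -- exceptional cut from a cut candidate e
    obtain ⟨he1, he2, hsubP, hsubT, hcnt⟩ := hcand
    obtain ⟨a, ham, ha1, ha2, ha3⟩ := exists_level hp (show e ≤ 2*n+2 by omega)
    obtain ⟨b, hbm, hb1, hb2, hb3⟩ := exists_level ht (show e ≤ 2*n+2 by omega)
    rw [ha3] at hcnt
    have hba : b = a+1 := by omega
    rw [hba] at hb1 hb2
    replace hbm : a+1 ≤ m := by omega
    have hb2' : e < t (a+2) := hb2
    rcases hde with hde | hde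
    · -- t j = e
      rcases Nat.eq_or_lt_of_le he1 with he1' | he1'
      · -- e = 1
        left; left
        have e0 : t j - 1 = 0 := by omega
        rw [e0]
        exact visCut_zero hp ht
      · -- e ≥ 2
        have hja : j = a+1 := by
          have u1 : ¬ (a+2 ≤ j) := fun h' => by
            have := ssym_mono_le ht h' (by omega); omega
          have u2 : ¬ (j ≤ a) := fun h' => by
            have := ht.mono j (a+1) (by omega) (by omega); omega
          omega
        have hteq : t (a+1) = e := by rw [← hja]; exact hde
        by_cases heP : ∃ k, 1 ≤ k ∧ k ≤ m ∧ p k = e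
        · obtain ⟨k, hk1, hk2, hk3⟩ := heP
          have hka : k = a := by
            have u1 : ¬ (a+1 ≤ k) := fun h' => by
              have := ssym_mono_le hp h' (by omega); omega
            have u2 : ¬ (k ≤ a-1) := fun h' => by
              have haz : 1 ≤ a := by
                by_contra h''
                have ha0 : a = 0 := by omega
                have := ssym_mono_le hp (show k ≤ a from by omega) (by omega)
                have := hp.zero
                omega
              have := hp.mono k a (by omega) (by omega)
              omega
            omega
          have hpa : p a = e := by rw [← hka]; exact hk3
          have ha1' : 1 ≤ a := by
            by_contra h''
            have ha0 : a = 0 := by omega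
            rw [ha0, hp.zero] at hpa
            omega
          have cT : (symSet m t ∩ Finset.Icc 1 (e-1)).card = a := by
            refine cnt_eq ht (by omega) ?_ ?_
            · have := ht.mono a (a+1) (by omega) (by omega); omega
            · omega
          have cP : (symSet m p ∩ Finset.Icc 1 (e-1)).card = a-1 := by
            have ea : a - 1 + 1 = a := by omega
            refine cnt_eq hp (by omega) ?_ ?_
            · have := hp.mono (a-1) a (by omega) (by omega); omega
            · rw [ea]; omega
          right; right
          refine ⟨hmis, e-1, ⟨by omega, by omega, ?_, ?_, by rw [cT, cP]; omega⟩,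
            Or.inl (by omega)⟩
          · intro x hx
            rw [Finset.mem_Icc] at hx
            by_cases hxe : x = e
            · subst hxe
              exact (mem_brP hp).mpr ⟨a, ha1', ham, Or.inl hpa⟩
            · exact hsubP (Finset.mem_Icc.mpr ⟨by omega, hx.2⟩)
          · intro x hx
            rw [Finset.mem_Icc] at hx
            by_cases hxe : x = e
            · subst hxe
              exact (mem_brP ht).mpr ⟨a+1, by omega, hbm, Or.inl hteq⟩
            · exact hsubT (Finset.mem_Icc.mpr ⟨by omega, hx.2⟩)
        · -- e ∉ P : visible cut at e-1
          push_neg at heP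
          have hpa' : p a ≤ e - 1 := by
            have hne : p a ≠ e := by
              rcases Nat.eq_zero_or_pos a with h0 | h0
              · rw [h0, hp.zero]; omega
              · exact heP a h0 ham
            omega
          left; left
          have e0 : t j - 1 = e - 1 := by omega
          rw [e0]
          exact ⟨a, ham, hpa', by omega⟩
    · -- t j = 2n+2 - e
      have heT : ∀ k, 1 ≤ k → k ≤ m → t k ≠ e+1 := by
        intro k hk1 hk2 heq
        exact ht.iso k j hk1 hk2 hj1 hj2 (by omega)
      have hta2' : e+1 < t (a+2) := by
        rcases Nat.lt_or_ge (a+1) m with h' | h'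
        · have := heT (a+2) (by omega) (by omega); omega
        · have hee : a+2 = m+1 := by omega
          rw [hee, ht.top]; omega
      have hcT1 : (symSet m t ∩ Finset.Icc 1 (e+1)).card = a+1 :=
        cnt_eq ht hbm (by omega) hta2'
      have he1P : (e+1) ∈ brP (2*n+2) (symSet m p) :=
        hsubP (Finset.mem_Icc.mpr ⟨le_refl _, by omega⟩)
      rw [mem_brP hp] at he1P
      obtain ⟨k, hk1, hk2, hkc⟩ := he1P
      rcases hkc with hk3 | hk3
      · -- p k = e+1 : contradiction with mismatch
        have hka : k = a+1 := by
          have u1 : ¬ (k ≤ a) := fun h' => by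
            have := ssym_mono_le hp h' (by omega); omega
          have u2 : ¬ (a+2 ≤ k) := fun h' => by
            have := hp.mono (a+1) k (by omega) (by omega); omega
          omega
        have hpa1 : p (a+1) = e+1 := by rw [← hka]; exact hk3
        have hcP1 : (symSet m p ∩ Finset.Icc 1 (e+1)).card = a+1 := by
          refine cnt_eq hp hbm (le_of_eq hpa1) ?_
          have := hp.mono (a+1) (a+1+1) (by omega) (by omega); omega
        exfalso
        rcases Nat.lt_or_ge e n with h' | h'
        · refine hmis ((hb.2 (e+1) (by omega) (by omega) ?_ ?_ (by rw [hcP1, hcT1])).symm)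
          · intro x hx
            apply hsubP
            rw [Finset.mem_Icc] at hx ⊢
            omega
          · intro x hx
            apply hsubT
            rw [Finset.mem_Icc] at hx ⊢
            omega
        · have hen : e = n := by omega
          have hTmem : (n+2) ∈ symSet m t := (ssym_mem _).mpr ⟨j, hj1, hj2, by omega⟩
          have hPmem : (n+1) ∈ symSet m p := (ssym_mem _).mpr ⟨a+1, by omega, hbm, by omega⟩
          rw [hen] at hcT1 hcP1
          exact hmis (by rw [tD_eq _ (Or.inr hTmem), tD_eq _ (Or.inl hPmem), hcT1, hcP1])
      · -- p k = 2n+2 - e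
        have hpk : p k = 2*n+2-e := by omega
        have hePn : ∀ k', 1 ≤ k' → k' ≤ m → p k' ≠ e+1 := by
          intro k' hk1' hk2' heq
          exact hp.iso k' k hk1' hk2' hk1 hk2 (by omega)
        have hpa2 : e+1 < p (a+1) := by
          have := hePn (a+1) (by omega) hbm
          omega
        have hcP1 : (symSet m p ∩ Finset.Icc 1 (e+1)).card = a :=
          cnt_eq hp ham (by omega) (by omega)
        rcases Nat.lt_or_ge e n with h' | h'
        · right; right
          refine ⟨hmis, e+1, ⟨by omega, by omega, ?_, ?_, by rw [hcT1, hcP1]⟩,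
            Or.inr (by omega)⟩
          · intro x hx
            apply hsubP
            rw [Finset.mem_Icc] at hx ⊢
            omega
          · intro x hx
            apply hsubT
            rw [Finset.mem_Icc] at hx ⊢
            omega
        · -- e = n : center cut
          have hen : e = n := by omega
          have hka : k = a+1 := by
            have u1 : ¬ (k ≤ a) := fun h' => by
              have := ssym_mono_le hp h' (by omega); omega
            have u2 : ¬ (a+2 ≤ k) := fun h' => by
              have := hp.mono (a+1) k (by omega) (by omega); omega
            omega
          right; left
          refine ⟨⟨k, hk1, hk2, Or.inl ⟨by omega, ?_⟩⟩, by omega⟩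
          rw [hka]
          have : e + 1 < t (a+1+1) := hta2'
          omega

end Main2
section Main3

variable {n m : ℕ} {p t : ℕ → ℕ}

lemma cut_succ (hp : IsSSym (2*n+2) m p) (ht : IsSSym (2*n+2) m t)
    (hb : bruhatD n m t p) {j : ℕ} (hj1 : 1 ≤ j) (hj2 : j ≤ m)
    (h : cutD n m p t (p j - 1)) : cutD n m p t (p j) := by
  have hpj1 : 1 ≤ p j := ssym_pos hp hj1 (by omega)
  have hpjN : p j ≤ 2*n+2 := hp.ub j hj1 hj2
  have hle := hb.1
  rcases h with (⟨i, him, hpi, hti⟩ | ⟨i, him, hpi, hti⟩) |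
    (⟨⟨i₀, h01, h02, hcc⟩, hceq⟩ | ⟨hmis, e, hcand, hde⟩)
  · -- visible cut at p j - 1
    have hij : i < j := by
      by_contra h'
      have := ssym_mono_le hp (show j ≤ i by omega) (by omega)
      omega
    have h1 : t (i+1) ≤ t j := ssym_mono_le ht (by omega) (by omega)
    have h2 : t j ≤ p j := hle j hj1 hj2
    have h3 : t j < t (j+1) := ht.mono j (j+1) (by omega) (by omega)
    left; left
    exact ⟨j, hj2, le_refl _, by omega⟩
  · -- visible cut at 2n+2 - (p j - 1)
    have key : p i ≠ 2*n+3 - p j := by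
      intro heq
      rcases Nat.eq_zero_or_pos i with h0 | h0
      · rw [h0, hp.zero] at heq; omega
      · exact hp.iso i j h0 him hj1 hj2 (by omega)
    left; right
    exact ⟨i, him, by omega, by omega⟩
  · -- exceptional center cut: p j = n+2
    have hpjn : p j = n+2 := by omega
    rcases hcc with ⟨hpi0, hti0⟩ | ⟨hti0, hpi0⟩
    · -- p i₀ = n+2
      have hij : i₀ = j := by
        have u1 : ¬ (i₀ < j) := fun h' => by
          have := hp.mono i₀ j h' (by omega); omega
        have u2 : ¬ (j < i₀) := fun h' => by
          have := hp.mono j i₀ h' (by omega); omega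
        omega
      have hti0' : n+2 ≤ t (j+1) := by rw [← hij]; exact hti0
      rcases Nat.lt_or_ge (n+2) (t (j+1)) with hgt | hle'
      · left; left
        exact ⟨j, hj2, by omega, by omega⟩
      · -- t (j+1) = n+2
        have htj1 : t (j+1) = n+2 := by omega
        rcases Nat.eq_zero_or_pos n with hn0 | hn0
        · left; right
          have e0 : 2*n+2 - p j = 0 := by omega
          rw [e0]
          exact visCut_zero hp ht
        · have hj1m : j+1 ≤ m := by
            by_contra h'
            have hee : j+1 = m+1 := by omega
            rw [hee, ht.top] at htj1
            omega
          have w1 : p (j-1) < p j := hp.mono (j-1) j (by omega) (by omega)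
          have w2 : p (j-1) ≠ n+1 := by
            rcases Nat.eq_zero_or_pos (j-1) with h0 | h0
            · rw [h0, hp.zero]; omega
            · exact fun heq => hp.iso (j-1) j h0 (by omega) hj1 hj2 (by omega)
          have w3 : t j ≠ n+1 := fun heq => ht.iso j (j+1) hj1 (by omega) (by omega) hj1m (by omega)
          have w4 : t j < t (j+1) := ht.mono j (j+1) (by omega) (by omega)
          have w5 : t j ≤ n := by omega
          have ej : j - 1 + 1 = j := by omega
          have hcP : (symSet m p ∩ Finset.Icc 1 n).card = j-1 :=
            cnt_eq hp (by omega) (by omega) (by rw [ej]; omega)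
          have hcT : (symSet m t ∩ Finset.Icc 1 n).card = j :=
            cnt_eq ht hj2 w5 (by omega)
          have hcPn1 : (symSet m p ∩ Finset.Icc 1 (n+1)).card = j-1 :=
            cnt_eq hp (by omega) (by omega) (by rw [ej]; omega)
          have hcTn1 : (symSet m t ∩ Finset.Icc 1 (n+1)).card = j :=
            cnt_eq ht hj2 (by omega) (by omega)
          have hTmem : (n+2) ∈ symSet m t := (ssym_mem _).mpr ⟨j+1, by omega, hj1m, htj1⟩
          have hPmem : (n+2) ∈ symSet m p := (ssym_mem _).mpr ⟨j, hj1, hj2, hpjn⟩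
          have hjn : j ≤ n := by
            have := ssym_ge ht (show j ≤ m+1 by omega)
            omega
          have hmis : tD n (symSet m t) ≠ tD n (symSet m p) := by
            rw [tD_eq _ (Or.inr hTmem), tD_eq _ (Or.inr hPmem), hcTn1, hcPn1]
            omega
          right; right
          refine ⟨hmis, n, ⟨hn0, le_refl n, ?_, ?_, by rw [hcT, hcP]; omega⟩,
            Or.inr (by omega)⟩
          · intro x hx
            rw [Finset.mem_Icc] at hx
            have hxe : x = n+1 := by omega
            subst hxe
            exact (mem_brP hp).mpr ⟨j, hj1, hj2, Or.inr (by omega)⟩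
          · intro x hx
            rw [Finset.mem_Icc] at hx
            have hxe : x = n+1 := by omega
            subst hxe
            exact (mem_brP ht).mpr ⟨j+1, by omega, hj1m, Or.inr (by omega)⟩
    · -- t i₀ = n+1
      rcases Nat.lt_or_ge (p (i₀-1)) (n+1) with hlt | hge
      · left; right
        have e1 : 2*n+2 - p j = n := by omega
        have e2 : i₀ - 1 + 1 = i₀ := by omega
        rw [e1]
        exact ⟨i₀-1, by omega, by omega, by rw [e2, hti0]; omega⟩
      · have hpe : p (i₀-1) = n+1 := by omega
        obtain ⟨hmis', hcand'⟩ := lemK hp ht h01 h02 hti0 hpe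
        right; right
        exact ⟨hmis', n, hcand', Or.inr (by omega)⟩
  · -- exceptional cut from a cut candidate e
    obtain ⟨he1, he2, hsubP, hsubT, hcnt⟩ := hcand
    obtain ⟨a, ham, ha1, ha2, ha3⟩ := exists_level hp (show e ≤ 2*n+2 by omega)
    obtain ⟨b, hbm, hb1, hb2, hb3⟩ := exists_level ht (show e ≤ 2*n+2 by omega)
    rw [ha3] at hcnt
    have hba : b = a+1 := by omega
    rw [hba] at hb1 hb2
    replace hbm : a+1 ≤ m := by omega
    have hb2' : e < t (a+1+1) := hb2
    rcases hde with hde | hde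
    · -- p j = e+1
      have hpj : p j = e+1 := by omega
      have hja : j = a+1 := by
        have u1 : ¬ (j ≤ a) := fun h' => by
          have := ssym_mono_le hp h' (by omega); omega
        have u2 : ¬ (a+2 ≤ j) := fun h' => by
          have := hp.mono (a+1) j (by omega) (by omega); omega
        omega
      have hpa1 : p (a+1) = e+1 := by rw [← hja]; exact hpj
      have hcP1 : (symSet m p ∩ Finset.Icc 1 (e+1)).card = a+1 := by
        refine cnt_eq hp hbm (le_of_eq hpa1) ?_
        have := hp.mono (a+1) (a+1+1) (by omega) (by omega); omega
      by_cases heT : ∃ k, 1 ≤ k ∧ k ≤ m ∧ t k = e+1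
      · obtain ⟨k, hk1, hk2, hk3⟩ := heT
        have hka : k = a+2 := by
          have u1 : ¬ (k ≤ a+1) := fun h' => by
            have := ssym_mono_le ht h' (by omega); omega
          have u2 : ¬ (a+3 ≤ k) := fun h' => by
            have := ht.mono (a+1+1) k (by omega) (by omega); omega
          omega
        have hta2 : t (a+1+1) = e+1 := by rw [← hka] at *; exact hk3
        have ha2m : a+2 ≤ m := by omega
        rcases Nat.lt_or_ge e n with h' | h'
        · have hta2n : t (a+2) = e+1 := hta2
          have hcT1 : (symSet m t ∩ Finset.Icc 1 (e+1)).card = a+2 := by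
            refine cnt_eq ht (by omega) (le_of_eq hta2n) ?_
            have := ht.mono (a+2) (a+2+1) (by omega) (by omega)
            omega
          right; right
          refine ⟨hmis, e+1, ⟨by omega, by omega, ?_, ?_, by rw [hcT1, hcP1]⟩,
            Or.inl (by omega)⟩
          · intro x hx
            apply hsubP
            rw [Finset.mem_Icc] at hx ⊢
            omega
          · intro x hx
            apply hsubT
            rw [Finset.mem_Icc] at hx ⊢
            omega
        · -- e = n : center cut, second form
          have hen : e = n := by omega
          right; left
          have hq2 : t (a+2) = e+1 := hta2
          refine ⟨⟨a+2, by omega, ha2m, Or.inr ⟨by omega, ?_⟩⟩, by omega⟩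
          have hq : p (a+2-1) = p (a+1) := rfl
          omega
      · -- e+1 ∉ T
        push_neg at heT
        have hta2' : e+1 < t (a+1+1) := by
          rcases Nat.lt_or_ge (a+1) m with h' | h'
          · have := heT (a+1+1) (by omega) (by omega); omega
          · have hee : a+1+1 = m+1 := by omega
            rw [hee, ht.top]; omega
        have hcT1 : (symSet m t ∩ Finset.Icc 1 (e+1)).card = a+1 :=
          cnt_eq ht hbm (by omega) hta2'
        exfalso
        rcases Nat.lt_or_ge e n with h' | h'
        · refine hmis ((hb.2 (e+1) (by omega) (by omega) ?_ ?_ (by rw [hcP1, hcT1])).symm)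
          · intro x hx
            apply hsubP
            rw [Finset.mem_Icc] at hx ⊢
            omega
          · intro x hx
            apply hsubT
            rw [Finset.mem_Icc] at hx ⊢
            omega
        · have hen : e = n := by omega
          have h1T : (e+1) ∈ brP (2*n+2) (symSet m t) :=
            hsubT (Finset.mem_Icc.mpr ⟨le_refl _, by omega⟩)
          rw [mem_brP ht] at h1T
          obtain ⟨k, hk1, hk2, hkc⟩ := h1T
          have hk3 : t k = 2*n+2-e := by
            rcases hkc with h | h
            · exact absurd h (heT k hk1 hk2)
            · omega
          have hTmem : (n+2) ∈ symSet m t := (ssym_mem _).mpr ⟨k, hk1, hk2, by omega⟩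
          have hPmem : (n+1) ∈ symSet m p := (ssym_mem _).mpr ⟨a+1, by omega, hbm, by omega⟩
          rw [hen] at hcT1 hcP1
          exact hmis (by rw [tD_eq _ (Or.inr hTmem), tD_eq _ (Or.inl hPmem), hcT1, hcP1])
    · -- p j = 2n+3 - e
      have hpj : p j = 2*n+3-e := by omega
      have hePn : ∀ k, 1 ≤ k → k ≤ m → p k ≠ e := by
        intro k hk1 hk2 heq
        exact hp.iso k j hk1 hk2 hj1 hj2 (by omega)
      have hpa' : p a ≤ e - 1 := by
        have hne : p a ≠ e := by
          rcases Nat.eq_zero_or_pos a with h0 | h0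
          · rw [h0, hp.zero]; omega
          · exact hePn a h0 ham
        omega
      by_cases heT : ∃ k, 1 ≤ k ∧ k ≤ m ∧ t k = e
      · -- e ∈ T
        obtain ⟨k, hk1, hk2, hk3⟩ := heT
        rcases Nat.eq_or_lt_of_le he1 with he1' | he1'
        · -- e = 1
          left; right
          have e0 : 2*n+2 - p j = 0 := by omega
          rw [e0]
          exact visCut_zero hp ht
        · -- e ≥ 2
          have hka : k = a+1 := by
            have u1 : ¬ (k ≤ a) := fun h' => by
              have h5 := ssym_mono_le ht h' (by omega)
              have h6 := ht.mono a (a+1) (by omega) (by omega)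
              omega
            have u2 : ¬ (a+2 ≤ k) := fun h' => by
              have := ssym_mono_le ht (show a+1+1 ≤ k by omega) (by omega); omega
            omega
          have hta1 : t (a+1) = e := by rw [← hka]; exact hk3
          have hcT : (symSet m t ∩ Finset.Icc 1 (e-1)).card = a := by
            refine cnt_eq ht (by omega) ?_ (by omega)
            have := ht.mono a (a+1) (by omega) (by omega); omega
          have hcP : (symSet m p ∩ Finset.Icc 1 (e-1)).card = a :=
            cnt_eq hp ham hpa' (by omega)
          exfalso
          refine hmis ((hb.2 (e-1) (by omega) (by omega) ?_ ?_ (by rw [hcP, hcT])).symm)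
          · intro x hx
            rw [Finset.mem_Icc] at hx
            by_cases hxe : x = e
            · subst hxe
              exact (mem_brP hp).mpr ⟨j, hj1, hj2, Or.inr (by omega)⟩
            · exact hsubP (Finset.mem_Icc.mpr ⟨by omega, hx.2⟩)
          · intro x hx
            rw [Finset.mem_Icc] at hx
            by_cases hxe : x = e
            · subst hxe
              exact (mem_brP ht).mpr ⟨k, hk1, hk2, Or.inl hk3⟩
            · exact hsubT (Finset.mem_Icc.mpr ⟨by omega, hx.2⟩)
      · -- e ∉ T
        push_neg at heT
        by_cases hkT : ∃ k, 1 ≤ k ∧ k ≤ m ∧ t k = 2*n+3-e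
        · -- 2n+3-e ∈ T : cut candidate e-1
          obtain ⟨k, hk1, hk2, hk3⟩ := hkT
          have hta1' : t (a+1) ≤ e-1 := by
            have := heT (a+1) (by omega) hbm
            omega
          have he2' : 2 ≤ e := by
            have := ssym_pos ht (show 1 ≤ a+1 by omega) (by omega)
            omega
          have hcT : (symSet m t ∩ Finset.Icc 1 (e-1)).card = a+1 :=
            cnt_eq ht hbm hta1' (by omega)
          have hcP : (symSet m p ∩ Finset.Icc 1 (e-1)).card = a :=
            cnt_eq hp ham hpa' (by omega)
          right; right
          refine ⟨hmis, e-1, ⟨by omega, by omega, ?_, ?_, by rw [hcT, hcP]⟩,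
            Or.inr (by omega)⟩
          · intro x hx
            rw [Finset.mem_Icc] at hx
            by_cases hxe : x = e
            · subst hxe
              exact (mem_brP hp).mpr ⟨j, hj1, hj2, Or.inr (by omega)⟩
            · exact hsubP (Finset.mem_Icc.mpr ⟨by omega, hx.2⟩)
          · intro x hx
            rw [Finset.mem_Icc] at hx
            by_cases hxe : x = e
            · subst hxe
              exact (mem_brP ht).mpr ⟨k, hk1, hk2, Or.inr (by omega)⟩
            · exact hsubT (Finset.mem_Icc.mpr ⟨by omega, hx.2⟩)
        · -- neither e nor 2n+3-e in T : counting forces a visible cut at p j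
          push_neg at hkT
          left; left
          refine ⟨j, hj2, le_refl _, ?_⟩
          by_contra hcon
          push_neg at hcon
          have hjm : j+1 ≤ m := by
            by_contra h'
            have hee : j+1 = m+1 := by omega
            rw [hee, ht.top] at hcon
            omega
          have htj1 : t (j+1) ≤ 2*n+2-e := by
            have := hkT (j+1) (by omega) hjm
            omega
          obtain ⟨g, hgm, hg1, hg2, hg3⟩ := exists_level hp (show 2*n+2-e ≤ 2*n+2 by omega)
          obtain ⟨bb, hbbm, hbb1, hbb2, hbb3⟩ := exists_level ht (show 2*n+2-e ≤ 2*n+2 by omega)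
          have hjbb : j+1 ≤ bb := by
            by_contra h'
            push_neg at h'
            have := ssym_mono_le ht (show bb+1 ≤ j+1 by omega) (by omega)
            omega
          have hgj : g < j := by
            by_contra h'
            push_neg at h'
            have := ssym_mono_le hp h' (by omega)
            omega
          have hP := cnt_split (symSet m p) he1 (show e ≤ 2*n+2-e by omega)
          have hT := cnt_split (symSet m t) he1 (show e ≤ 2*n+2-e by omega)
          have hup := iso_upper ht he2
          have hlo := brP_lower hp he2 hsubP
          omega

end Main3
/-- (type D) If `T ⪯ P` and `c ∈ 𝓛_{P,T}`, then both `c` and `c−1`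
belong to the type-D cut set `𝓒_{P,T}` (including exceptional cuts). -/
theorem stmt_6 (n m : ℕ) (p t : ℕ → ℕ)
    (hp : IsSSym (2*n+2) m p) (ht : IsSSym (2*n+2) m t)
    (hb : bruhatD n m t p)
    (c : ℕ) (hc : LSet (2*n+2) m p t (cutD n m p t) c) :
    cutD n m p t c ∧ cutD n m p t (c-1) := by
  obtain ⟨hc1, hc2, hcase⟩ := hc
  rcases hcase with ⟨j, hjm, hz1, hz2⟩ | ⟨j, hj1, hj2, hd1, hd2, hls⟩
  · -- zero column
    constructor
    · exact Or.inl (Or.inl ⟨j, hjm, by omega, hz2⟩)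
    · exact Or.inl (Or.inl ⟨j, hjm, by omega, by omega⟩)
  · -- lone star in column 2n+3-c
    rcases hls with ⟨heq, hcut⟩ | ⟨heq, hcut⟩
    · rw [heq] at hcut
      have h2 := cut_pred hp ht hb hj1 hj2 hcut
      have htjN : t j ≤ 2*n+2 := ht.ub j hj1 hj2
      have htj1 : 1 ≤ t j := ssym_pos ht hj1 (by omega)
      constructor
      · have h3 := cutD_symm (c := t j - 1) (by omega) h2
        have e1 : 2*n+2 - (t j - 1) = c := by omega
        rwa [e1] at h3
      · have h3 := cutD_symm (c := t j) (by omega) hcut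
        have e1 : 2*n+2 - t j = c - 1 := by omega
        rwa [e1] at h3
    · rw [heq] at hcut
      have h2 := cut_succ hp ht hb hj1 hj2 hcut
      have hpjN : p j ≤ 2*n+2 := hp.ub j hj1 hj2
      have hpj1 : 1 ≤ p j := ssym_pos hp hj1 (by omega)
      constructor
      · have h3 := cutD_symm (c := p j - 1) (by omega) hcut
        have e1 : 2*n+2 - (p j - 1) = c := by omega
        rwa [e1] at h3
      · have h3 := cutD_symm (c := p j) (by omega) h2
        have e1 : 2*n+2 - p j = c - 1 := by omega
        rwa [e1] at h3
end

section
/- Let T ⪯ P be Schubert symbols for an isotropic Grassmannian of type B, C, or D. If c−1 and c both belong to Q_{P,T}, then c ∈ L_{P,T} or N+1−c ∈ L_{P,T}. -/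
open scoped Classical

/-! ### Auxiliary lemmas -/

section Aux

variable {N m : ℕ} {p t : ℕ → ℕ}

lemma monoLe (hp : IsSSym N m p) {i j : ℕ} (hij : i ≤ j) (hj : j ≤ m+1) : p i ≤ p j := by
  rcases eq_or_lt_of_le hij with h | h
  · rw [h]
  · exact (hp.mono i j h hj).le

/-- Each column `e ∈ [1,N]` is either a zero column, or nonempty in some row `j`. -/
lemma rowDich (hp : IsSSym N m p) (ht : IsSSym N m t) {e : ℕ} (h1 : 1 ≤ e) (hN : e ≤ N) :
    zeroCol m p t e ∨ ∃ j, 1 ≤ j ∧ j ≤ m ∧ t j ≤ e ∧ e ≤ p j := by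
  classical
  set j := Nat.findGreatest (fun i => t i ≤ e) m with hj
  have hjm : j ≤ m := Nat.findGreatest_le m
  have htj : t j ≤ e :=
    Nat.findGreatest_spec (P := fun i => t i ≤ e) (Nat.zero_le m) (by show t 0 ≤ e; rw [ht.zero]; omega)
  have hlt : e < t (j+1) := by
    rcases eq_or_lt_of_le hjm with h' | h'
    · rw [h', ht.top]; omega
    · by_contra hcon
      push_neg at hcon
      exact Nat.findGreatest_is_greatest (P := fun i => t i ≤ e) (n := m) (by omega) (by omega) hcon
  by_cases hpe : e ≤ p j
  · right
    refine ⟨j, ?_, hjm, htj, hpe⟩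
    by_contra h0
    push_neg at h0
    have hp0 : p j = 0 := by
      have : j = 0 := by omega
      rw [this, hp.zero]
    omega
  · left
    exact ⟨j, hjm, by omega, hlt⟩

/-- If `c-1` is a visible cut and column `c` is nonempty in row `j`, then `c = t j`. -/
lemma eqT (hp : IsSSym N m p) (ht : IsSSym N m t) {c j : ℕ}
    (h : visCut m p t (c-1)) (hc : 1 ≤ c) (hj1 : 1 ≤ j) (hjm : j ≤ m)
    (htj : t j ≤ c) (hpj : c ≤ p j) : c = t j ∧ p (j-1) ≤ c-1 := by
  obtain ⟨i, him, hpi, hti⟩ := h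
  have hij : i < j := by
    by_contra hcon
    push_neg at hcon
    have := monoLe hp hcon (by omega)
    omega
  have h1 : t (i+1) ≤ t j := monoLe ht (by omega) (by omega)
  have hceq : c = t j := by omega
  have hjeq : i + 1 = j := by
    by_contra hcon
    have := ht.mono (i+1) j (by omega) (by omega)
    omega
  refine ⟨hceq, ?_⟩
  rw [← hjeq]
  exact hpi

/-- If `c` is a visible cut and column `c` is nonempty in row `j`, then `c = p j`. -/
lemma eqP (hp : IsSSym N m p) (ht : IsSSym N m t) {c j : ℕ}
    (h : visCut m p t c) (hj1 : 1 ≤ j) (hjm : j ≤ m)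
    (htj : t j ≤ c) (hpj : c ≤ p j) : c = p j ∧ c < t (j+1) := by
  obtain ⟨i, him, hpi, hti⟩ := h
  have hij : j ≤ i := by
    by_contra hcon
    push_neg at hcon
    have := monoLe ht (show i+1 ≤ j by omega) (by omega)
    omega
  have h1 : p j ≤ p i := monoLe hp hij (by omega)
  have hii : i = j := by
    by_contra hcon
    have := hp.mono j i (by omega) (by omega)
    omega
  exact ⟨by omega, hii ▸ hti⟩

lemma appSym {x : ℕ} (hx : x ≤ N) (h : appCut N m p t x) : appCut N m p t (N - x) := by
  rcases h with h | h
  · right; rwa [Nat.sub_sub_self hx]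
  · left; exact h

/-- The master argument: from cuts around `c` and around `N+1-c`, together with
case information from the cut at `c-1`, deduce membership in `𝓛`. -/
lemma master (hp : IsSSym N m p) (ht : IsSSym N m t) (hle : leS m t p) (cut : ℕ → Prop)
    (c : ℕ) (h1 : 1 ≤ c) (hN : c ≤ N)
    (hc1 : cut (c-1)) (hc : cut c) (hd : cut (N+1-c)) (hd1 : cut (N-c))
    (hcase : visCut m p t (c-1) ∨ visCut m p t (N+1-c) ∨
      ∃ i, 1 ≤ i ∧ i ≤ m ∧ (t i = c ∨ t i = N+1-c)) :
    LSet N m p t cut c ∨ LSet N m p t cut (N+1-c) := by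
  have hb1 : 1 ≤ N+1-c := by omega
  have hbN : N+1-c ≤ N := by omega
  have hcc : N+1-(N+1-c) = c := by omega
  by_cases hz : zeroCol m p t c
  · exact Or.inl ⟨h1, hN, Or.inl hz⟩
  by_cases hz' : zeroCol m p t (N+1-c)
  · exact Or.inr ⟨hb1, hbN, Or.inl hz'⟩
  obtain ⟨j, hj1, hjm, htj, hpj⟩ := (rowDich hp ht h1 hN).resolve_left hz
  obtain ⟨k, hk1, hkm, htk, hpk⟩ := (rowDich hp ht hb1 hbN).resolve_left hz'
  rcases hcase with h | h | ⟨i, hi1, him, hti⟩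
  · obtain ⟨hceq, -⟩ := eqT hp ht h h1 hj1 hjm htj hpj
    right
    refine ⟨hb1, hbN, Or.inr ⟨j, ?_⟩⟩
    rw [hcc]
    exact ⟨hj1, hjm, htj, hpj, Or.inl ⟨hceq, hc⟩⟩
  · obtain ⟨hdeq, -⟩ := eqP hp ht h hk1 hkm htk hpk
    left
    refine ⟨h1, hN, Or.inr ⟨k, hk1, hkm, htk, hpk, Or.inr ⟨hdeq, ?_⟩⟩⟩
    rw [show N+1-c-1 = N-c by omega]
    exact hd1
  · rcases hti with h' | h'
    · right
      refine ⟨hb1, hbN, Or.inr ⟨i, ?_⟩⟩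
      rw [hcc]
      exact ⟨hi1, him, h'.le, h' ▸ hle i hi1 him, Or.inl ⟨h'.symm, hc⟩⟩
    · left
      refine ⟨h1, hN, Or.inr ⟨i, hi1, him, h'.le, h' ▸ hle i hi1 him, Or.inl ⟨h'.symm, hd⟩⟩⟩

lemma cutDSym {n : ℕ} {x : ℕ} (hx : x ≤ 2*n+2) (h : cutD n m p t x) :
    cutD n m p t (2*n+2-x) := by
  rcases h with h | h
  · exact Or.inl (appSym hx h)
  · right
    rcases h with ⟨hcc, hx'⟩ | ⟨hne, d, hd, he⟩
    · exact Or.inl ⟨hcc, by omega⟩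
    · refine Or.inr ⟨hne, d, hd, ?_⟩
      have h1d := hd.1
      have h2d := hd.2.1
      rcases he with rfl | rfl
      · right; rfl
      · left; omega

lemma brP_cases {q : ℕ → ℕ} {x : ℕ} (hx : x ∈ brP N (symSet m q)) :
    ∃ i, 1 ≤ i ∧ i ≤ m ∧ (q i = x ∨ N+1-q i = x) := by
  rcases Finset.mem_union.1 hx with h | h
  · obtain ⟨i, hi, rfl⟩ := Finset.mem_image.1 h
    exact ⟨i, (Finset.mem_Icc.1 hi).1, (Finset.mem_Icc.1 hi).2, Or.inl rfl⟩
  · obtain ⟨y, hy, hxy⟩ := Finset.mem_image.1 h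
    obtain ⟨i, hi, rfl⟩ := Finset.mem_image.1 hy
    exact ⟨i, (Finset.mem_Icc.1 hi).1, (Finset.mem_Icc.1 hi).2, Or.inr hxy⟩

lemma Icc_split (n : ℕ) : Finset.Icc 1 (n+1) = insert (n+1) (Finset.Icc 1 n) := by
  ext x
  simp only [Finset.mem_Icc, Finset.mem_insert]
  omega

/-- The parity contradiction: `n+1 ∈ T`, `n+2 ∈ P` and `#(T∩[1,n]) = #(P∩[1,n])+1`
force `t(T) = t(P)`. -/
lemma parityEq {n : ℕ} (hp : IsSSym (2*n+2) m p) (ht : IsSSym (2*n+2) m t)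
    {i : ℕ} (hi1 : 1 ≤ i) (him : i ≤ m) (hti : t i = n+1)
    {i' : ℕ} (hi'1 : 1 ≤ i') (hi'm : i' ≤ m) (hpi : p i' = n+2)
    (hcard : (symSet m t ∩ Finset.Icc 1 n).card = (symSet m p ∩ Finset.Icc 1 n).card + 1) :
    tD n (symSet m t) = tD n (symSet m p) := by
  have hTmem : n+1 ∈ symSet m t :=
    Finset.mem_image.2 ⟨i, Finset.mem_Icc.2 ⟨hi1, him⟩, hti⟩
  have hPmem : n+2 ∈ symSet m p :=
    Finset.mem_image.2 ⟨i', Finset.mem_Icc.2 ⟨hi'1, hi'm⟩, hpi⟩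
  have hPnot : (n+1) ∉ symSet m p := by
    intro h
    obtain ⟨a, ha, hpa⟩ := Finset.mem_image.1 h
    have ha' := Finset.mem_Icc.1 ha
    exact hp.iso a i' ha'.1 ha'.2 hi'1 hi'm (by omega)
  unfold tD
  rw [if_pos (Or.inl hTmem), if_pos (Or.inr hPmem)]
  have hA : (Finset.Icc 1 (n+1)).card = n+1 := by
    rw [Nat.card_Icc]; omega
  have h1 := Finset.card_sdiff_add_card_inter (Finset.Icc 1 (n+1)) (symSet m t)
  have h2 := Finset.card_sdiff_add_card_inter (Finset.Icc 1 (n+1)) (symSet m p)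
  have hT : (Finset.Icc 1 (n+1) ∩ symSet m t).card = (symSet m t ∩ Finset.Icc 1 n).card + 1 := by
    rw [Icc_split, Finset.insert_inter_of_mem hTmem,
      Finset.card_insert_of_notMem (by simp), Finset.inter_comm]
  have hP : (Finset.Icc 1 (n+1) ∩ symSet m p).card = (symSet m p ∩ Finset.Icc 1 n).card := by
    rw [Icc_split, Finset.insert_inter_of_notMem hPnot, Finset.inter_comm]
  omega

end Aux
/-- In each Lie type (C with `N = 2n`, B with `N = 2n+1`, D with `N = 2n+2`),
for Schubert symbols `T ⪯ P`, if `c−1` and `c` both belong to `𝓠_{P,T}`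
then `c ∈ 𝓛_{P,T}` or `N+1−c ∈ 𝓛_{P,T}`. -/
theorem stmt_9 :
    -- type C
    (∀ n m : ℕ, ∀ p t : ℕ → ℕ, IsSSym (2*n) m p → IsSSym (2*n) m t → leS m t p →
      ∀ c, 1 ≤ c →
        (c-1 ≤ n ∧ appCut (2*n) m p t (c-1)) →
        (c ≤ n ∧ appCut (2*n) m p t c) →
        (LSet (2*n) m p t (appCut (2*n) m p t) c ∨
         LSet (2*n) m p t (appCut (2*n) m p t) (2*n+1-c))) ∧
    -- type B
    (∀ n m : ℕ, ∀ p t : ℕ → ℕ, IsSSym (2*n+1) m p → IsSSym (2*n+1) m t → leS m t p →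
      ∀ c, 1 ≤ c →
        ((c-1 ≤ n ∧ appCut (2*n+1) m p t (c-1)) ∨ c-1 = n+1) →
        ((c ≤ n ∧ appCut (2*n+1) m p t c) ∨ c = n+1) →
        (LSet (2*n+1) m p t (appCut (2*n+1) m p t) c ∨
         LSet (2*n+1) m p t (appCut (2*n+1) m p t) (2*n+2-c))) ∧
    -- type D
    (∀ n m : ℕ, ∀ p t : ℕ → ℕ, IsSSym (2*n+2) m p → IsSSym (2*n+2) m t → bruhatD n m t p →
      ∀ c, 1 ≤ c →
        ((c-1 ≤ n ∧ cutD n m p t (c-1)) ∨ c-1 = n+1) →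
        ((c ≤ n ∧ cutD n m p t c) ∨ c = n+1) →
        (LSet (2*n+2) m p t (cutD n m p t) c ∨
         LSet (2*n+2) m p t (cutD n m p t) (2*n+3-c))) := by
  refine ⟨?_, ?_, ?_⟩
  · -- type C
    intro n m p t hp ht hle c hc h1 h2
    obtain ⟨h1n, h1cut⟩ := h1
    obtain ⟨h2n, h2cut⟩ := h2
    have hcN : c ≤ 2*n := by omega
    have hd : appCut (2*n) m p t (2*n+1-c) := by
      have := appSym (show c-1 ≤ 2*n by omega) h1cut
      rwa [show 2*n-(c-1) = 2*n+1-c by omega] at this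
    have hd1 : appCut (2*n) m p t (2*n-c) := appSym hcN h2cut
    have hcase : visCut m p t (c-1) ∨ visCut m p t (2*n+1-c) ∨
        ∃ i, 1 ≤ i ∧ i ≤ m ∧ (t i = c ∨ t i = 2*n+1-c) := by
      rcases h1cut with h | h
      · exact Or.inl h
      · rw [show 2*n-(c-1) = 2*n+1-c by omega] at h
        exact Or.inr (Or.inl h)
    exact master hp ht hle _ c hc hcN h1cut h2cut hd hd1 hcase
  · -- type B
    intro n m p t hp ht hle c hc h1 h2
    rcases h2 with ⟨h2n, h2cut⟩ | h2e
    · rcases h1 with ⟨h1n, h1cut⟩ | h1e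
      · have hcN : c ≤ 2*n+1 := by omega
        have hd : appCut (2*n+1) m p t (2*n+1+1-c) := by
          have := appSym (show c-1 ≤ 2*n+1 by omega) h1cut
          rwa [show 2*n+1-(c-1) = 2*n+1+1-c by omega] at this
        have hd1 : appCut (2*n+1) m p t (2*n+1-c) := appSym hcN h2cut
        have hcase : visCut m p t (c-1) ∨ visCut m p t (2*n+1+1-c) ∨
            ∃ i, 1 ≤ i ∧ i ≤ m ∧ (t i = c ∨ t i = 2*n+1+1-c) := by
          rcases h1cut with h | h
          · exact Or.inl h
          · rw [show 2*n+1-(c-1) = 2*n+1+1-c by omega] at h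
            exact Or.inr (Or.inl h)
        have := master hp ht hle _ c hc hcN h1cut h2cut hd hd1 hcase
        rwa [show 2*n+1+1-c = 2*n+2-c by omega] at this
      · omega
    · -- c = n+1
      subst h2e
      rcases h1 with ⟨-, h1cut⟩ | h1e
      · have h1cut' : appCut (2*n+1) m p t n := h1cut
        have h2cut : appCut (2*n+1) m p t (n+1) := by
          rcases h1cut' with h | h
          · right
            rwa [show 2*n+1-(n+1) = n by omega]
          · rw [show 2*n+1-n = n+1 by omega] at h
            exact Or.inl h
        have hcN : n+1 ≤ 2*n+1 := by omega
        have hd : appCut (2*n+1) m p t (2*n+1+1-(n+1)) := by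
          rwa [show 2*n+1+1-(n+1) = n+1 by omega]
        have hd1 : appCut (2*n+1) m p t (2*n+1-(n+1)) := by
          rwa [show 2*n+1-(n+1) = n by omega]
        have hcase : visCut m p t (n+1-1) ∨ visCut m p t (2*n+1+1-(n+1)) ∨
            ∃ i, 1 ≤ i ∧ i ≤ m ∧ (t i = n+1 ∨ t i = 2*n+1+1-(n+1)) := by
          rcases h1cut' with h | h
          · exact Or.inl h
          · rw [show 2*n+1-n = 2*n+1+1-(n+1) by omega] at h
            exact Or.inr (Or.inl h)
        have := master hp ht hle _ (n+1) (by omega) hcN h1cut h2cut hd hd1 hcase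
        rwa [show 2*n+1+1-(n+1) = 2*n+2-(n+1) by omega] at this
      · omega
  · -- type D
    intro n m p t hp ht hbr c hc h1 h2
    have hle : leS m t p := hbr.1
    rcases h2 with ⟨h2n, h2cut⟩ | h2e
    · rcases h1 with ⟨h1n, h1cut⟩ | h1e
      swap
      · omega
      have hcN : c ≤ 2*n+2 := by omega
      have hd : cutD n m p t (2*n+2+1-c) := by
        have := cutDSym (show c-1 ≤ 2*n+2 by omega) h1cut
        rwa [show 2*n+2-(c-1) = 2*n+2+1-c by omega] at this
      have hd1 : cutD n m p t (2*n+2-c) := cutDSym hcN h2cut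
      have hcase : visCut m p t (c-1) ∨ visCut m p t (2*n+2+1-c) ∨
          ∃ i, 1 ≤ i ∧ i ≤ m ∧ (t i = c ∨ t i = 2*n+2+1-c) := by
        rcases h1cut with h | h
        · rcases h with h | h
          · exact Or.inl h
          · rw [show 2*n+2-(c-1) = 2*n+2+1-c by omega] at h
            exact Or.inr (Or.inl h)
        · rcases h with ⟨-, habs⟩ | ⟨hne, d₀, hcand, hd₀⟩
          · omega
          · have hcd1 := hcand.1
            have hcd2 := hcand.2.1
            have hd₀' : c - 1 = d₀ := by
              rcases hd₀ with h' | h'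
              · exact h'
              · omega
            subst hd₀'
            have hmem : c ∈ brP (2*n+2) (symSet m t) := by
              refine hcand.2.2.2.1 ?_
              rw [Finset.mem_Icc]
              omega
            obtain ⟨i, hi1, him, hi⟩ := brP_cases hmem
            refine Or.inr (Or.inr ⟨i, hi1, him, ?_⟩)
            rcases hi with h' | h'
            · exact Or.inl h'
            · have := ht.ub i hi1 him
              right
              omega
      have := master hp ht hle _ c hc hcN h1cut h2cut hd hd1 hcase
      rwa [show 2*n+2+1-c = 2*n+3-c by omega] at this
    · -- c = n+1, the center column case
      subst h2e
      rcases h1 with ⟨-, hn⟩ | h1e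
      swap
      · omega
      have hn' : cutD n m p t n := hn
      rw [show 2*n+3-(n+1) = n+2 by omega]
      rcases hn' with happ | hexc
      · -- cutD n is apparent
        rcases happ with h | h
        · -- visCut n
          rcases rowDich hp ht (show 1 ≤ n+1 by omega) (show n+1 ≤ 2*n+2 by omega) with hz | ⟨j, hj1, hjm, htj, hpj⟩
          · exact Or.inl ⟨by omega, by omega, Or.inl hz⟩
          · obtain ⟨hceq, hpj1⟩ := eqT hp ht (show visCut m p t (n+1-1) from h)
              (by omega) hj1 hjm htj hpj
            have hcut1 : cutD n m p t (n+1) :=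
              Or.inr (Or.inl ⟨⟨j, hj1, hjm, Or.inr ⟨hceq.symm, by omega⟩⟩, rfl⟩)
            right
            refine ⟨by omega, by omega, Or.inr ⟨j, ?_⟩⟩
            rw [show 2*n+2+1-(n+2) = n+1 by omega]
            exact ⟨hj1, hjm, htj, hpj, Or.inl ⟨hceq, hcut1⟩⟩
        · -- visCut (2n+2-n) = visCut (n+2)
          rw [show 2*n+2-n = n+2 by omega] at h
          rcases rowDich hp ht (show 1 ≤ n+2 by omega) (show n+2 ≤ 2*n+2 by omega) with hz | ⟨k, hk1, hkm, htk, hpk⟩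
          · exact Or.inr ⟨by omega, by omega, Or.inl hz⟩
          · obtain ⟨hdeq, hdlt⟩ := eqP hp ht h hk1 hkm htk hpk
            have hcut1 : cutD n m p t (n+1) :=
              Or.inr (Or.inl ⟨⟨k, hk1, hkm, Or.inl ⟨hdeq.symm, by omega⟩⟩, rfl⟩)
            left
            refine ⟨by omega, by omega, Or.inr ⟨k, ?_⟩⟩
            rw [show 2*n+2+1-(n+1) = n+2 by omega]
            exact ⟨hk1, hkm, htk, hpk, Or.inr ⟨hdeq, hcut1⟩⟩
      · -- cutD n is exceptional
        rcases hexc with ⟨-, habs⟩ | ⟨hne, d₀, hcand, hd₀⟩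
        · omega
        · have hcd1 := hcand.1
          have hcd2 := hcand.2.1
          have hd₀' : n = d₀ := by
            rcases hd₀ with h' | h'
            · exact h'
            · omega
          subst hd₀'
          have hmemP : n+1 ∈ brP (2*n+2) (symSet m p) := by
            refine hcand.2.2.1 ?_
            rw [Finset.mem_Icc]
            omega
          have hmemT : n+1 ∈ brP (2*n+2) (symSet m t) := by
            refine hcand.2.2.2.1 ?_
            rw [Finset.mem_Icc]
            omega
          obtain ⟨i', hi'1, hi'm, hi'⟩ := brP_cases hmemP
          have hi'' : p i' = n+1 ∨ p i' = n+2 := by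
            have := hp.ub i' hi'1 hi'm
            rcases hi' with h' | h'
            · exact Or.inl h'
            · right; omega
          rcases hi'' with h' | h'
          · -- p i' = n+1 : lone star in column n+1
            right
            refine ⟨by omega, by omega, Or.inr ⟨i', ?_⟩⟩
            rw [show 2*n+2+1-(n+2) = n+1 by omega]
            exact ⟨hi'1, hi'm, by have := hle i' hi'1 hi'm; omega, by omega,
              Or.inr ⟨h'.symm, hn⟩⟩
          · obtain ⟨i, hi1, him, hi⟩ := brP_cases hmemT
            have hi'' : t i = n+1 ∨ t i = n+2 := by
              have := ht.ub i hi1 him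
              rcases hi with h'' | h''
              · exact Or.inl h''
              · right; omega
            rcases hi'' with h'' | h''
            · -- t i = n+1, p i' = n+2 : parity contradiction
              exact absurd (parityEq hp ht hi1 him h'' hi'1 hi'm h' hcand.2.2.2.2) hne
            · -- t i = n+2 : lone star in column n+2
              left
              refine ⟨by omega, by omega, Or.inr ⟨i, ?_⟩⟩
              rw [show 2*n+2+1-(n+1) = n+2 by omega]
              have hcut2 : cutD n m p t (n+2) := by
                have := cutDSym (show n ≤ 2*n+2 by omega) hn
                rwa [show 2*n+2-n = n+2 by omega] at this
              exact ⟨hi1, him, h''.le, by have := hle i hi1 him; omega,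
                Or.inl ⟨h''.symm, hcut2⟩⟩
end

section
/- With P' constructed as above from T ⪯ P in type B or C, one has L_{P,T} = L_{P',T}; consequently the varieties Z_{P,T} and Z_{P',T} are defined by the same linear and quadratic equations, so Z_{P,T} = Z_{P',T}. -/
open scoped Classical

namespace Stmt12Aux

variable {N m : ℕ} {p t : ℕ → ℕ}

lemma monoLe (hp : IsSSym N m p) {i j : ℕ} (hij : i ≤ j) (hj : j ≤ m+1) : p i ≤ p j := by
  rcases Nat.eq_or_lt_of_le hij with h | h
  · exact h ▸ le_rfl
  · exact (hp.mono i j h hj).le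

lemma pos_of_one_le (hp : IsSSym N m p) {j : ℕ} (hj1 : 1 ≤ j) (hj : j ≤ m+1) : 1 ≤ p j := by
  have := hp.mono 0 j hj1 hj
  have h0 := hp.zero
  omega

lemma t_one_pos (ht : IsSSym N m t) : 1 ≤ t 1 := pos_of_one_le ht le_rfl (by omega)

lemma visZero (hp : IsSSym N m p) (ht : IsSSym N m t) : visCut m p t 0 :=
  ⟨0, Nat.zero_le _, by rw [hp.zero], by simp only [Nat.zero_add]; exact t_one_pos ht⟩

lemma appMirror (hp : IsSSym N m p) (ht : IsSSym N m t) {c : ℕ}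
    (h : appCut N m p t (N - c)) : appCut N m p t c := by
  rcases le_or_gt c N with hc | hc
  · rcases h with h | h
    · exact Or.inr h
    · have he : N - (N - c) = c := by omega
      rw [he] at h; exact Or.inl h
  · exact Or.inr (by rw [show N - c = 0 by omega]; exact visZero hp ht)

/-- a visible cut right before the end of a row forces the row to be a single box. -/
lemma visPm1 (hp : IsSSym N m p) (ht : IsSSym N m t) (hle : leS m t p) {w : ℕ}
    (hw1 : 1 ≤ w) (hw2 : w ≤ m) (h : visCut m p t (p w - 1)) : t w = p w := by
  obtain ⟨k, hk, h1, h2⟩ := h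
  have hpw : 1 ≤ p w := pos_of_one_le hp hw1 (by omega)
  have hkw : k < w := by
    by_contra hc
    have := monoLe hp (show w ≤ k by omega) (by omega)
    omega
  have h3 : t (k+1) ≤ t w := monoLe ht (by omega) (by omega)
  have h4 : t w ≤ p w := hle w hw1 hw2
  omega

/-- no visible cut strictly inside the star region of an (unfinished) row. -/
lemma notVisInRow (hp : IsSSym N m p) (ht : IsSSym N m t) {j x : ℕ}
    (hj : j ≤ m) (h1 : t j ≤ x) (h2 : x < t (j+1)) (h3 : t (j+1) ≤ p j) :
    ¬ visCut m p t x := by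
  rintro ⟨k, hk, hk1, hk2⟩
  have hjk : j ≤ k := by
    by_contra hc
    have := monoLe ht (show k+1 ≤ j by omega) (by omega)
    omega
  have := monoLe hp hjk (by omega)
  omega

/-- no zero column inside the star region of a row. -/
lemma notZeroInRow (hp : IsSSym N m p) (ht : IsSSym N m t) {j x : ℕ}
    (hj : j ≤ m) (h1 : t j ≤ x) (h2 : x ≤ p j) : ¬ zeroCol m p t x := by
  rintro ⟨k, hk, hk1, hk2⟩
  rcases le_or_gt (k+1) j with hc | hc
  · have := monoLe ht hc (by omega); omega
  · have := monoLe hp (show j ≤ k by omega) (by omega); omega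

/-- a column of `𝓛` strictly inside the star region of an unfinished row forces a
mirror visible cut. -/
lemma LInRowVis (hp : IsSSym N m p) (ht : IsSSym N m t) (hle : leS m t p) {j d : ℕ}
    (hj1 : 1 ≤ j) (hj2 : j ≤ m) (h1 : t j < d) (h2 : d < t (j+1)) (h3 : t (j+1) ≤ p j)
    (hd : LSet N m p t (appCut N m p t) d) : visCut m p t (N + 1 - d) := by
  obtain ⟨hd1, hd2, hzs⟩ := hd
  rcases hzs with hz | ⟨w, hw1, hw2, hw3, hw4, hcase⟩
  · exact absurd hz (notZeroInRow hp ht hj2 (by omega) (by omega))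
  · rcases hcase with ⟨hef, hcut⟩ | ⟨hef, hcut⟩
    · rcases hcut with hv | hv
      · exact hv
      · have he : N - (N + 1 - d) = d - 1 := by omega
        rw [he] at hv
        exact absurd hv (notVisInRow hp ht hj2 (by omega) (by omega) h3)
    · rcases hcut with hv | hv
      · have htw : t w = p w := visPm1 hp ht hle hw1 hw2 (by rw [hef] at hv; exact hv)
        refine ⟨w, hw2, by omega, ?_⟩
        have := ht.mono w (w+1) (by omega) (by omega)
        omega
      · have he : N - (N + 1 - d - 1) = d := by omega
        rw [he] at hv
        exact absurd hv (notVisInRow hp ht hj2 (by omega) h2 h3)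

/-- Claim A : in an unfinished row, the column `t i` is not in `𝓛`. -/
lemma tNotL (hp : IsSSym N m p) (ht : IsSSym N m t) (hle : leS m t p) {i : ℕ}
    (hi1 : 1 ≤ i) (hi2 : i ≤ m) (h3 : t (i+1) ≤ p i) :
    ¬ LSet N m p t (appCut N m p t) (t i) := by
  rintro ⟨hb1, hb2, hz | ⟨w, hw1, hw2, hw3, hw4, hcase⟩⟩
  · exact notZeroInRow hp ht hi2 le_rfl (hle i hi1 hi2) hz
  · have htlt : t i < t (i+1) := ht.mono i (i+1) (by omega) (by omega)
    rcases hcase with ⟨hef, _⟩ | ⟨hef, hcut⟩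
    · exact ht.iso w i hw1 hw2 hi1 hi2 (by omega)
    · rcases hcut with hv | hv
      · have htw : t w = p w := visPm1 hp ht hle hw1 hw2 (by rw [hef] at hv; exact hv)
        exact ht.iso w i hw1 hw2 hi1 hi2 (by omega)
      · have he : N - (N + 1 - t i - 1) = t i := by omega
        rw [he] at hv
        exact notVisInRow hp ht hi2 le_rfl htlt h3 hv

lemma Pp_spec3 (hp : IsSSym N m p) (ht : IsSSym N m t) (hle : leS m t p) {i : ℕ}
    (hi2 : i ≤ m) (h3 : t (i+1) ≤ p i) (hcut : appCut N m p t (t (i+1) - 1)) :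
    t i ≤ Pp N m p t i ∧ Pp N m p t i ≤ t (i+1) - 1 ∧
    ¬ LSet N m p t (appCut N m p t) (Pp N m p t i) ∧
    ∀ d, Pp N m p t i < d → d ≤ t (i+1) - 1 → LSet N m p t (appCut N m p t) d := by
  have hi1 : 1 ≤ i := by
    by_contra hc
    have h0 : i = 0 := by omega
    have := t_one_pos ht
    rw [h0, hp.zero] at h3
    simp only [Nat.zero_add] at h3
    omega
  have htlt : t i < t (i+1) := ht.mono i (i+1) (by omega) (by omega)
  have hPp : Pp N m p t i = ((Finset.Icc (t i) (t (i+1) - 1)).filter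
      (fun c => ¬ LSet N m p t (appCut N m p t) c)).sup id := by
    rw [Pp, if_neg (by omega), if_neg (not_not_intro hcut)]
  set S := (Finset.Icc (t i) (t (i+1) - 1)).filter
      (fun c => ¬ LSet N m p t (appCut N m p t) c) with hS
  have hmem : t i ∈ S := by
    rw [hS, Finset.mem_filter, Finset.mem_Icc]
    exact ⟨⟨le_rfl, by omega⟩, tNotL hp ht hle hi1 hi2 h3⟩
  obtain ⟨b, hb, hsup⟩ := Finset.exists_mem_eq_sup S ⟨t i, hmem⟩ id
  simp only [id_eq] at hsup
  rw [Finset.mem_filter, Finset.mem_Icc] at hb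
  rw [hPp, hsup]
  refine ⟨hb.1.1, hb.1.2, hb.2, ?_⟩
  intro d hd1 hd2
  by_contra hc
  have hdS : d ∈ S := by
    rw [hS, Finset.mem_filter, Finset.mem_Icc]
    exact ⟨⟨by omega, hd2⟩, hc⟩
  have := Finset.le_sup (f := id) hdS
  simp only [id_eq, hsup] at this
  omega

lemma Pp_le (hp : IsSSym N m p) (ht : IsSSym N m t) (hle : leS m t p) {i : ℕ}
    (hi2 : i ≤ m) : Pp N m p t i ≤ p i := by
  rw [Pp]
  split_ifs with h1 h2
  · exact le_rfl
  · refine Finset.sup_le fun b hb => ?_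
    rw [Finset.mem_filter, Finset.mem_Icc] at hb
    simp only [id]
    omega
  · omega

lemma Pp_ge (hp : IsSSym N m p) (ht : IsSSym N m t) (hle : leS m t p) {i : ℕ}
    (hi1 : 1 ≤ i) (hi2 : i ≤ m) : t i ≤ Pp N m p t i := by
  by_cases h1 : p i < t (i+1)
  · rw [Pp, if_pos h1]; exact hle i hi1 hi2
  · by_cases h2 : appCut N m p t (t (i+1) - 1)
    · exact (Pp_spec3 hp ht hle hi2 (by omega) h2).1
    · rw [Pp, if_neg h1, if_pos h2]
      exact (ht.mono i (i+1) (by omega) (by omega)).le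

lemma visPp (hp : IsSSym N m p) (ht : IsSSym N m t) (hle : leS m t p) {x : ℕ}
    (h : visCut m p t x) : visCut m (Pp N m p t) t x := by
  obtain ⟨i, hi, h1, h2⟩ := h
  exact ⟨i, hi, le_trans (Pp_le hp ht hle hi) h1, h2⟩

lemma visPp_rev (hp : IsSSym N m p) (ht : IsSSym N m t) (hle : leS m t p) {x : ℕ}
    (h : visCut m (Pp N m p t) t x) : appCut N m p t x := by
  obtain ⟨i, hi, h1, h2⟩ := h
  by_cases hc1 : p i < t (i+1)
  · rw [Pp, if_pos hc1] at h1
    exact Or.inl ⟨i, hi, h1, h2⟩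
  · by_cases hc2 : appCut N m p t (t (i+1) - 1)
    · obtain ⟨hA, hB, hC, hD⟩ := Pp_spec3 hp ht hle hi (by omega) hc2
      have hi1 : 1 ≤ i := by
        by_contra hc
        have h0 : i = 0 := by omega
        have := t_one_pos ht
        rw [h0, hp.zero] at hc1
        simp only [Nat.zero_add] at hc1
        omega
      rcases eq_or_lt_of_le (show x ≤ t (i+1) - 1 by omega) with hx | hx
      · rw [hx]; exact hc2
      · have hLd := hD (x+1) (by omega) (by omega)
        have hv := LInRowVis hp ht hle hi1 hi (by omega) (by omega) (by omega) hLd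
        rw [show N + 1 - (x+1) = N - x by omega] at hv
        exact Or.inr hv
    · rw [Pp, if_neg hc1, if_pos hc2] at h1
      omega

lemma cutIff (hp : IsSSym N m p) (ht : IsSSym N m t) (hle : leS m t p) (c : ℕ) :
    appCut N m p t c ↔ appCut N m (Pp N m p t) t c := by
  constructor
  · rintro (h | h)
    · exact Or.inl (visPp hp ht hle h)
    · exact Or.inr (visPp hp ht hle h)
  · rintro (h | h)
    · exact visPp_rev hp ht hle h
    · exact appMirror hp ht (visPp_rev hp ht hle h)

lemma LSet_cut_congr {q : ℕ → ℕ} {cut1 cut2 : ℕ → Prop} (h : ∀ x, cut1 x ↔ cut2 x) (c : ℕ) :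
    LSet N m q t cut1 c ↔ LSet N m q t cut2 c := by
  simp only [LSet, loneStar, h]

lemma LIff (hp : IsSSym N m p) (ht : IsSSym N m t) (hle : leS m t p) (c : ℕ) :
    LSet N m p t (appCut N m p t) c ↔ LSet N m (Pp N m p t) t (appCut N m p t) c := by
  constructor
  · rintro ⟨h1, h2, h3⟩
    refine ⟨h1, h2, ?_⟩
    rcases h3 with ⟨k, hk, hk1, hk2⟩ | ⟨j, hj1, hj2, hj3, hj4, hcase⟩
    · exact Or.inl ⟨k, hk, lt_of_le_of_lt (Pp_le hp ht hle hk) hk1, hk2⟩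
    · rcases hcase with ⟨he, hcut⟩ | ⟨he, hcut⟩
      · exact Or.inr ⟨j, hj1, hj2, hj3, by rw [he]; exact Pp_ge hp ht hle hj1 hj2,
          Or.inl ⟨he, hcut⟩⟩
      · by_cases hc1 : p j < t (j+1)
        · refine Or.inr ⟨j, hj1, hj2, hj3, ?_, Or.inr ⟨?_, hcut⟩⟩ <;>
            rw [Pp, if_pos hc1] <;> [exact hj4; exact he]
        · have htlt : t j < t (j+1) := ht.mono j (j+1) (by omega) (by omega)
          rcases hcut with hv | hv
          · have := visPm1 hp ht hle hj1 hj2 (by rw [he] at hv; exact hv)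
            omega
          · rw [show N - (N + 1 - c - 1) = c by omega] at hv
            obtain ⟨k, hk, hk1, hk2⟩ := hv
            have hkc : p k < c := by
              rcases eq_or_lt_of_le hk1 with hq | hq
              · exfalso
                have hk1' : 1 ≤ k := by
                  by_contra hc
                  have : k = 0 := by omega
                  rw [this, hp.zero] at hq
                  omega
                have hpjN : p j ≤ N := hp.ub j hj1 hj2
                exact hp.iso k j hk1' hk hj1 hj2 (by omega)
              · exact hq
            exact Or.inl ⟨k, hk, lt_of_le_of_lt (Pp_le hp ht hle hk) hkc, hk2⟩
  · rintro ⟨h1, h2, h3⟩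
    refine ⟨h1, h2, ?_⟩
    rcases h3 with ⟨k, hk, hk1, hk2⟩ | ⟨j, hj1, hj2, hj3, hj4, hcase⟩
    · by_cases hpk : p k < c
      · exact Or.inl ⟨k, hk, hpk, hk2⟩
      · by_cases hc1 : p k < t (k+1)
        · rw [Pp, if_pos hc1] at hk1
          omega
        · by_cases hc2 : appCut N m p t (t (k+1) - 1)
          · obtain ⟨hA, hB, hC, hD⟩ := Pp_spec3 hp ht hle hk (by omega) hc2
            exact (hD c hk1 (by omega)).2.2
          · rw [Pp, if_neg hc1, if_pos hc2] at hk1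
            omega
    · rcases hcase with ⟨he, hcut⟩ | ⟨he, hcut⟩
      · exact Or.inr ⟨j, hj1, hj2, hj3, le_trans hj4 (Pp_le hp ht hle hj2),
          Or.inl ⟨he, hcut⟩⟩
      · by_cases hc1 : p j < t (j+1)
        · rw [Pp, if_pos hc1] at he hj4
          exact Or.inr ⟨j, hj1, hj2, hj3, hj4, Or.inr ⟨he, hcut⟩⟩
        · by_cases hc2 : appCut N m p t (t (j+1) - 1)
          · -- case 3 : the main claim.  Write e := Pp j = N+1-c.
            obtain ⟨hA, hB, hC, hD⟩ := Pp_spec3 hp ht hle hj2 (by omega) hc2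
            have htj1 : 1 ≤ t j := pos_of_one_le ht hj1 (by omega)
            have htlt : t j < t (j+1) := ht.mono j (j+1) (by omega) (by omega)
            have hpjN : p j ≤ N := hp.ub j hj1 hj2
            have heq : Pp N m p t j = N + 1 - c := he.symm
            -- Step 1: vis (c-1)
            have hstep1 : visCut m p t (c - 1) := by
              rcases eq_or_lt_of_le hB with hec | hec
              · rcases hc2 with hv | hv
                · exact absurd hv (notVisInRow hp ht hj2 (by omega) (by omega) (by omega))
                · rwa [show N - (t (j+1) - 1) = c - 1 by omega] at hv
              · have hLd := hD (Pp N m p t j + 1) (by omega) (by omega)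
                have hv := LInRowVis hp ht hle hj1 hj2 (by omega) (by omega) (by omega) hLd
                rwa [show N + 1 - (Pp N m p t j + 1) = c - 1 by omega] at hv
            have hcut_cm1 : appCut N m p t (c - 1) := Or.inl hstep1
            obtain ⟨k, hkm, hk1, hk2⟩ := hstep1
            by_cases hck : c < t (k+1)
            · exact Or.inl ⟨k, hkm, by omega, hck⟩
            · have hceq : c = t (k+1) := by omega
              by_cases hetj : Pp N m p t j = t j
              · -- Step 4 : iso of T
                exfalso
                have hkm' : k + 1 ≤ m := by
                  by_contra hcc
                  have hkm'' : k = m := by omega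
                  rw [hkm'', ht.top] at hceq
                  omega
                exact ht.iso (k+1) j (by omega) hkm' hj1 hj2 (by omega)
              · -- Step 5
                have hetj' : t j < Pp N m p t j := lt_of_le_of_ne hA (Ne.symm hetj)
                rcases hcut with hv | hv
                · exact absurd (by rw [← heq] at hv; exact hv : visCut m p t (Pp N m p t j - 1))
                    (notVisInRow hp ht hj2 (by omega) (by omega) (by omega))
                · rw [show N - (N + 1 - c - 1) = c by omega] at hv
                  obtain ⟨k', hk'm, hk'1, hk'2⟩ := hv
                  by_cases hpk' : p k' < c
                  · exact Or.inl ⟨k', hk'm, hpk', hk'2⟩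
                  · exfalso
                    have hpc : p k' = c := by omega
                    have hk'1' : 1 ≤ k' := by
                      by_contra hcc
                      have : k' = 0 := by omega
                      rw [this, hp.zero] at hpc
                      omega
                    apply hC
                    refine ⟨by omega, by omega, Or.inr ⟨k', hk'1', hk'm, ?_, ?_, Or.inr ⟨?_, ?_⟩⟩⟩
                    · rw [show N + 1 - Pp N m p t j = c by omega]
                      exact le_trans (hle k' hk'1' hk'm) (le_of_eq hpc)
                    · rw [show N + 1 - Pp N m p t j = c by omega]
                      exact le_of_eq hpc.symm
                    · rw [show N + 1 - Pp N m p t j = c by omega]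
                      exact hpc.symm
                    · rw [show N + 1 - Pp N m p t j = c by omega]
                      exact hcut_cm1
          · rw [Pp, if_neg hc1, if_pos hc2] at he
            rw [he] at hcut
            exact absurd hcut hc2

lemma mainL (hp : IsSSym N m p) (ht : IsSSym N m t) (hle : leS m t p) (c : ℕ) :
    LSet N m p t (appCut N m p t) c ↔
      LSet N m (Pp N m p t) t (appCut N m (Pp N m p t) t) c :=
  (LIff hp ht hle c).trans (LSet_cut_congr (cutIff hp ht hle) c)

end Stmt12Aux

/-- (types B/C) `𝓛_{P,T} = 𝓛_{P',T}`; consequently `Z_{P,T} = Z_{P',T}`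
(the two varieties are defined by the same linear and quadratic equations).
Stated for type C (`N = 2n`, `𝓠 = [0,n] ∩ 𝓒`) and type B (`N = 2n+1`,
`𝓠 = ([0,n] ∩ 𝓒) ∪ {n+1}`). -/
theorem stmt_12 :
    -- type C
    (∀ n m : ℕ, ∀ p t : ℕ → ℕ, IsSSym (2*n) m p → IsSSym (2*n) m t → leS m t p →
      ((∀ c, LSet (2*n) m p t (appCut (2*n) m p t) c ↔
             LSet (2*n) m (Pp (2*n) m p t) t (appCut (2*n) m (Pp (2*n) m p t) t) c) ∧
       Zvar (2*n) m p t (fun c => c ≤ n ∧ appCut (2*n) m p t c)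
           (appCut (2*n) m p t)
         = Zvar (2*n) m (Pp (2*n) m p t) t
             (fun c => c ≤ n ∧ appCut (2*n) m (Pp (2*n) m p t) t c)
             (appCut (2*n) m (Pp (2*n) m p t) t))) ∧
    -- type B
    (∀ n m : ℕ, ∀ p t : ℕ → ℕ, IsSSym (2*n+1) m p → IsSSym (2*n+1) m t → leS m t p →
      ((∀ c, LSet (2*n+1) m p t (appCut (2*n+1) m p t) c ↔
             LSet (2*n+1) m (Pp (2*n+1) m p t) t (appCut (2*n+1) m (Pp (2*n+1) m p t) t) c) ∧
       Zvar (2*n+1) m p t (fun c => (c ≤ n ∧ appCut (2*n+1) m p t c) ∨ c = n+1)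
           (appCut (2*n+1) m p t)
         = Zvar (2*n+1) m (Pp (2*n+1) m p t) t
             (fun c => (c ≤ n ∧ appCut (2*n+1) m (Pp (2*n+1) m p t) t c) ∨ c = n+1)
             (appCut (2*n+1) m (Pp (2*n+1) m p t) t))) := by
  constructor
  · intro n m p t hp ht hle
    refine ⟨Stmt12Aux.mainL hp ht hle, ?_⟩
    ext x
    simp only [Zvar, Set.mem_setOf_eq]
    constructor
    · rintro ⟨hq, hl⟩
      exact ⟨fun c hc => hq c ⟨hc.1, (Stmt12Aux.cutIff hp ht hle c).mpr hc.2⟩,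
        fun c hc => hl c ((Stmt12Aux.mainL hp ht hle c).mpr hc)⟩
    · rintro ⟨hq, hl⟩
      exact ⟨fun c hc => hq c ⟨hc.1, (Stmt12Aux.cutIff hp ht hle c).mp hc.2⟩,
        fun c hc => hl c ((Stmt12Aux.mainL hp ht hle c).mp hc)⟩
  · intro n m p t hp ht hle
    refine ⟨Stmt12Aux.mainL hp ht hle, ?_⟩
    ext x
    simp only [Zvar, Set.mem_setOf_eq]
    constructor
    · rintro ⟨hq, hl⟩
      refine ⟨fun c hc => ?_, fun c hc => hl c ((Stmt12Aux.mainL hp ht hle c).mpr hc)⟩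
      exact hq c (hc.elim (fun h => Or.inl ⟨h.1, (Stmt12Aux.cutIff hp ht hle c).mpr h.2⟩) Or.inr)
    · rintro ⟨hq, hl⟩
      refine ⟨fun c hc => ?_, fun c hc => hl c ((Stmt12Aux.mainL hp ht hle c).mp hc)⟩
      exact hq c (hc.elim (fun h => Or.inl ⟨h.1, (Stmt12Aux.cutIff hp ht hle c).mp h.2⟩) Or.inr)
end

section
/- With P' constructed as above from T ⪯ P in type B or C, one has P' → T; that is: (i) T ⪯ P'; (ii) p'_i ≤ t_{i+1} for all 1 ≤ i ≤ m−1 (no 2×2 squares in D(P',T)); and (iii) whenever p'_i = t_{i+1}, the integer p'_i is not a cut of D(P',T). -/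
open scoped Classical

section Stmt13Helpers

variable {N m : ℕ} {p t : ℕ → ℕ}

private lemma sle (h : IsSSym N m t) {a b : ℕ} (hab : a ≤ b) (hb : b ≤ m+1) : t a ≤ t b := by
  rcases Nat.eq_or_lt_of_le hab with rfl | hlt
  · exact le_rfl
  · exact (h.mono a b hlt hb).le

private lemma spos (h : IsSSym N m t) {j : ℕ} (hj : 1 ≤ j) (hjm : j ≤ m+1) : 1 ≤ t j := by
  have h1 := h.mono 0 j (by omega) hjm
  have h2 := h.zero
  omega

/-- If `t j` is an apparent cut then so is `t j - 1` (types B/C). -/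
private lemma cutL1 (hp : IsSSym N m p) (ht : IsSSym N m t) (hle : leS m t p)
    {j : ℕ} (hj1 : 1 ≤ j) (hjm : j ≤ m)
    (h : appCut N m p t (t j)) : appCut N m p t (t j - 1) := by
  have htj1 : 1 ≤ t j := spos ht hj1 (by omega)
  have htjN : t j ≤ N := ht.ub j hj1 hjm
  rcases h with ⟨k, hk, h1, h2⟩ | ⟨k, hk, h1, h2⟩
  · have hjk : j ≤ k := by
      by_contra hc
      push_neg at hc
      have := sle ht (show k+1 ≤ j by omega) (by omega)
      omega
    rcases Nat.eq_or_lt_of_le hjk with rfl | hlt2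
    · have hpj : p j = t j := le_antisymm h1 (hle j hj1 hjm)
      left
      refine ⟨j-1, by omega, ?_, ?_⟩
      · have := hp.mono (j-1) j (by omega) (by omega)
        omega
      · have hjj : j - 1 + 1 = j := by omega
        rw [hjj]; omega
    · exfalso
      have h3 := hle k (by omega) hk
      have h4 := sle ht (show j+1 ≤ k by omega) (by omega)
      have h5 := ht.mono j (j+1) (by omega) (by omega)
      omega
  · right
    have e : N - (t j - 1) = N - t j + 1 := by omega
    rw [e]
    refine ⟨k, hk, by omega, ?_⟩
    have hlt2 : N - t j + 1 ≤ t (k+1) := by omega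
    rcases Nat.eq_or_lt_of_le hlt2 with heq | hlt3
    · exfalso
      rcases Nat.eq_or_lt_of_le hk with rfl | hkm
      · have := ht.top; omega
      · have := ht.iso (k+1) j (by omega) (by omega) hj1 hjm
        omega
    · exact hlt3

/-- If `p j - 1` is an apparent cut then so is `p j` (types B/C). -/
private lemma cutL1' (hp : IsSSym N m p) (ht : IsSSym N m t) (hle : leS m t p)
    {j : ℕ} (hj1 : 1 ≤ j) (hjm : j ≤ m)
    (h : appCut N m p t (p j - 1)) : appCut N m p t (p j) := by
  have htj : t j ≤ p j := hle j hj1 hjm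
  have h1j : 1 ≤ t j := spos ht hj1 (by omega)
  have hpjN : p j ≤ N := hp.ub j hj1 hjm
  rcases h with ⟨k, hk, h1, h2⟩ | ⟨k, hk, h1, h2⟩
  · have hkj : k < j := by
      by_contra hc
      push_neg at hc
      have := sle hp (show j ≤ k by omega) (by omega)
      omega
    have h4 : t (k+1) ≤ t j := sle ht (by omega) (by omega)
    have h5 := ht.mono j (j+1) (by omega) (by omega)
    left
    exact ⟨j, hjm, le_rfl, by omega⟩
  · right
    have e : N - (p j - 1) = N - p j + 1 := by omega
    rw [e] at h1 h2
    refine ⟨k, hk, ?_, by omega⟩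
    by_contra hc
    push_neg at hc
    have hpk : p k = N + 1 - p j := by omega
    rcases Nat.eq_zero_or_pos k with rfl | hk1
    · have := hp.zero; omega
    · exact hp.iso k j hk1 hk hj1 hjm (by omega)

/-- If `d ∈ 𝓛_{P,T}` then `d - 1` is an apparent cut. -/
private lemma cutL2 (hp : IsSSym N m p) (ht : IsSSym N m t) (hle : leS m t p)
    {d : ℕ} (h : LSet N m p t (appCut N m p t) d) : appCut N m p t (d - 1) := by
  obtain ⟨hd1, hdN, hor⟩ := h
  rcases hor with ⟨k, hkm, hk1, hk2⟩ | ⟨j, hj1, hjm, htc, hcp, hdisj⟩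
  · exact Or.inl ⟨k, hkm, by omega, by omega⟩
  · have key : appCut N m p t (N + 1 - d) := by
      rcases hdisj with ⟨hc, hcut⟩ | ⟨hc, hcut⟩
      · exact hcut
      · rw [hc] at hcut ⊢
        exact cutL1' hp ht hle hj1 hjm hcut
    have e1 : N - (N + 1 - d) = d - 1 := by omega
    have e2 : N - (d - 1) = N + 1 - d := by omega
    rcases key with hv | hv
    · right; rw [e2]; exact hv
    · left; rw [e1] at hv; exact hv

/-- Under the branch-3 hypotheses, `t i` is not in `𝓛_{P,T}`. -/
private lemma tNotL (hp : IsSSym N m p) (ht : IsSSym N m t) (hle : leS m t p)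
    {i : ℕ} (hi1 : 1 ≤ i) (him : i ≤ m)
    (hge : t (i+1) ≤ p i) : ¬ LSet N m p t (appCut N m p t) (t i) := by
  have hti1 : 1 ≤ t i := spos ht hi1 (by omega)
  have htiN : t i < t (i+1) := ht.mono i (i+1) (by omega) (by omega)
  have hpiN : p i ≤ N := hp.ub i hi1 him
  have hvis : ¬ visCut m p t (t i) := by
    rintro ⟨k, hk, hk1, hk2⟩
    have hik : i ≤ k := by
      by_contra hc; push_neg at hc
      have := sle ht (show k+1 ≤ i by omega) (by omega)
      omega
    have := sle hp hik (by omega)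
    omega
  rintro ⟨h1, hN, hor⟩
  rcases hor with ⟨k, hk, hz1, hz2⟩ | ⟨j, hj1, hjm, htc, hcp, hdisj⟩
  · have hik : i ≤ k := by
      by_contra hc; push_neg at hc
      have := sle ht (show k+1 ≤ i by omega) (by omega)
      omega
    have := sle hp hik (by omega)
    omega
  · rcases hdisj with ⟨hc, _⟩ | ⟨hc, hcut⟩
    · exact ht.iso j i hj1 hjm hi1 him (by omega)
    · have e : N + 1 - t i - 1 = N - t i := by omega
      rw [e] at hcut
      rcases hcut with ⟨k, hk, hk1, hk2⟩ | ⟨k, hk, hk1, hk2⟩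
      · have hkj : k < j := by
          by_contra hcon; push_neg at hcon
          have := sle hp hcon (by omega)
          omega
        have hjk1 : j ≤ k + 1 := by
          by_contra hcon; push_neg at hcon
          have := ht.mono (k+1) j (by omega) (by omega)
          omega
        have hj' : j = k + 1 := by omega
        subst hj'
        exact ht.iso (k+1) i hj1 hjm hi1 him (by omega)
      · have e2 : N - (N - t i) = t i := by omega
        rw [e2] at hk1 hk2
        exact hvis ⟨k, hk, hk1, hk2⟩

private lemma Pp_cases (N m : ℕ) (p t : ℕ → ℕ) (j : ℕ) :
    (p j < t (j+1) ∧ Pp N m p t j = p j) ∨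
    (¬ p j < t (j+1) ∧ ¬ appCut N m p t (t (j+1) - 1) ∧ Pp N m p t j = t (j+1)) ∨
    (¬ p j < t (j+1) ∧ appCut N m p t (t (j+1) - 1) ∧
      Pp N m p t j = ((Finset.Icc (t j) (t (j+1) - 1)).filter
        (fun c => ¬ LSet N m p t (appCut N m p t) c)).sup id) := by
  unfold Pp
  split_ifs with h1 h2
  · exact Or.inl ⟨h1, rfl⟩
  · exact Or.inr (Or.inr ⟨h1, h2, rfl⟩)
  · exact Or.inr (Or.inl ⟨h1, h2, rfl⟩)

/-- Sliding a cut down past `𝓛`-columns above the sup. -/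
private lemma chain (hp : IsSSym N m p) (ht : IsSSym N m t) (hle : leS m t p)
    {j d : ℕ} (hj1 : 1 ≤ j) (hjm : j ≤ m)
    (hc : appCut N m p t (t (j+1) - 1))
    (hdub : d ≤ t (j+1) - 1) (hdlb : t j ≤ d)
    (hsup : ∀ e ∈ (Finset.Icc (t j) (t (j+1) - 1)).filter
        (fun c => ¬ LSet N m p t (appCut N m p t) c), e ≤ d) :
    appCut N m p t d := by
  rcases Nat.eq_or_lt_of_le hdub with heq | hlt
  · rwa [heq]
  · have hmem : LSet N m p t (appCut N m p t) (d+1) := by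
      by_contra hL
      have := hsup (d+1)
        (Finset.mem_filter.mpr ⟨Finset.mem_Icc.mpr ⟨by omega, by omega⟩, hL⟩)
      omega
    have := cutL2 hp ht hle hmem
    simpa using this

private lemma cut_mirror {c : ℕ} (hcN : c ≤ N) (h : appCut N m p t (N - c)) :
    appCut N m p t c := by
  have e : N - (N - c) = c := by omega
  rcases h with hv | hv
  · exact Or.inr hv
  · rw [e] at hv; exact Or.inl hv

end Stmt13Helpers

/-- (types B/C) The constructed `P'` satisfies `P' → T`:
(i) `T ⪯ P'`; (ii) `p'_i ≤ t_{i+1}` for `1 ≤ i ≤ m−1`; (iii) if `p'_i = t_{i+1}`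
then `p'_i` is not a cut of `D(P',T)`. -/
theorem stmt_13 (N m : ℕ) (p t : ℕ → ℕ)
    (hp : IsSSym N m p) (ht : IsSSym N m t) (hle : leS m t p) :
    leS m t (Pp N m p t) ∧
    (∀ i, 1 ≤ i → i ≤ m-1 → Pp N m p t i ≤ t (i+1)) ∧
    (∀ i, 1 ≤ i → i ≤ m-1 → Pp N m p t i = t (i+1) →
      ¬ appCut N m (Pp N m p t) t (Pp N m p t i)) := by
  have part1 : leS m t (Pp N m p t) := by
    intro i h1 h2
    rcases Pp_cases N m p t i with ⟨hlt, he⟩ | ⟨hge, _, he⟩ | ⟨hge, _, he⟩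
    · rw [he]; exact hle i h1 h2
    · rw [he]; exact (ht.mono i (i+1) (by omega) (by omega)).le
    · rw [he]
      have hmem : t i ∈ (Finset.Icc (t i) (t (i+1) - 1)).filter
          (fun c => ¬ LSet N m p t (appCut N m p t) c) := by
        refine Finset.mem_filter.mpr ⟨Finset.mem_Icc.mpr ⟨le_rfl, ?_⟩, ?_⟩
        · have := ht.mono i (i+1) (by omega) (by omega); omega
        · exact tNotL hp ht hle h1 h2 (by omega)
      simpa using Finset.le_sup (f := id) hmem
  refine ⟨part1, ?_, ?_⟩
  · intro i h1 h2
    rcases Pp_cases N m p t i with ⟨hlt, he⟩ | ⟨_, _, he⟩ | ⟨_, _, he⟩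
    · rw [he]; omega
    · rw [he]
    · rw [he]
      refine Finset.sup_le fun b hb => ?_
      have hb2 := (Finset.mem_Icc.mp (Finset.mem_filter.mp hb).1).2
      show b ≤ t (i+1)
      omega
  · intro i h1 h2 heq hcut
    have him : i ≤ m := by omega
    have hi1m : i + 1 ≤ m := by omega
    have hcN : t (i+1) ≤ N := ht.ub (i+1) (by omega) hi1m
    have hc1 : 1 ≤ t (i+1) := spos ht (by omega) (by omega)
    rcases Pp_cases N m p t i with ⟨hlt, he⟩ | ⟨hge, hnocut, he⟩ | ⟨hge, hcc, he⟩
    · rw [he] at heq; omega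
    · -- branch 2 at i
      rw [heq] at hcut
      rcases hcut with ⟨j, hjm, hqj, hjlt⟩ | ⟨j, hjm, hqj, hjlt⟩
      · -- visible cut of D(P',T) at t (i+1)
        have hj1 : 1 ≤ j := by
          by_contra hc0; push_neg at hc0
          have hj0 : j = 0 := by omega
          subst hj0
          simp only [Nat.zero_add] at hjlt
          have := ht.mono 1 (i+1) (by omega) (by omega)
          omega
        have htj : t j ≤ Pp N m p t j := part1 j hj1 hjm
        have hjle : j ≤ i + 1 := by
          by_contra hcon; push_neg at hcon
          have := ht.mono (i+1) j hcon (by omega)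
          omega
        have hjge : i + 1 ≤ j := by
          by_contra hcon; push_neg at hcon
          have := sle ht (show j + 1 ≤ i + 1 by omega) (by omega)
          omega
        have hj : j = i + 1 := by omega
        subst hj
        have hq : Pp N m p t (i+1) = t (i+1) := le_antisymm hqj htj
        rcases Pp_cases N m p t (i+1) with ⟨hlt', he'⟩ | ⟨_, _, he'⟩ | ⟨hge', hcc', he'⟩
        · rw [he'] at hq
          have := hp.mono i (i+1) (by omega) (by omega)
          omega
        · rw [he'] at hq
          have := ht.mono (i+1) (i+1+1) (by omega) (by omega)
          omega
        · rw [he'] at hq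
          have hkey : appCut N m p t (t (i+1)) := by
            refine chain hp ht hle (show 1 ≤ i+1 by omega) hi1m hcc' ?_ le_rfl ?_
            · have := ht.mono (i+1) (i+1+1) (by omega) (by omega); omega
            · intro e he''
              have := Finset.le_sup (f := id) he''
              rw [hq] at this
              exact this
          exact hnocut (cutL1 hp ht hle (by omega) hi1m hkey)
      · -- visible cut of D(P',T) at N - t (i+1)
        have hkey : appCut N m p t (t (i+1)) := by
          rcases Nat.eq_zero_or_pos j with rfl | hj1
          · have h0 : p 0 ≤ N - t (i+1) := by have := hp.zero; omega
            have hq0 : Pp N m p t 0 ≤ N - t (i+1) := hqj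
            exact cut_mirror hcN (Or.inl ⟨0, by omega, h0, hjlt⟩)
          · rcases Pp_cases N m p t j with ⟨hlt', he'⟩ | ⟨_, _, he'⟩ | ⟨hge', hcc', he'⟩
            · rw [he'] at hqj
              exact cut_mirror hcN (Or.inl ⟨j, hjm, hqj, hjlt⟩)
            · rw [he'] at hqj; omega
            · have htj : t j ≤ Pp N m p t j := part1 j hj1 hjm
              rw [he'] at hqj htj
              refine cut_mirror hcN (chain hp ht hle hj1 hjm hcc' (by omega) (by omega) ?_)
              intro e he''
              have := Finset.le_sup (f := id) he''
              exact le_trans this hqj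
        exact hnocut (cutL1 hp ht hle (by omega) hi1m hkey)
    · -- branch 3 at i: sup ≤ t (i+1) - 1 < t (i+1)
      rw [he] at heq
      have hsle : ((Finset.Icc (t i) (t (i+1) - 1)).filter
          (fun c => ¬ LSet N m p t (appCut N m p t) c)).sup id ≤ t (i+1) - 1 := by
        refine Finset.sup_le fun b hb => ?_
        have hb2 := (Finset.mem_Icc.mp (Finset.mem_filter.mp hb).1).2
        exact hb2
      omega
end
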